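/- arXiv:2504.01674 — 6 statements merged into one kernel-verified Lean document; each statement's English description precedes it below -/
import Mathlib

section
/- Sharp vector-valued Gagliardo–Nirenberg inequality for the finitely coupled system: for every integer N ≥ 1 and every N-tuple 𝐮 = (u₁,…,u_N) of H¹ functions u_j : ℝ² → ℂ, one has ∫_{ℝ²} ( 2(∑_{j=1}^N |u_j(x)|²)² − ∑_{j=1}^N |u_j(x)|⁴ ) dx ≤ (2(2N−1)/N)·‖Q₀‖_{L²}^{−2} · (∑_{j=1}^N ∫_{ℝ²} |u_j|² dx) · (∑_{j=1}^N ∫_{ℝ²} |∇u_j|² dx). (The left-hand side equals ∑_{j=1}^N ∫ F_j(𝐮)·conj(u_j) dx, where F_j(𝐮) = 2∑_{k=1}^N |u_k|²u_j − |u_j|²u_j.) -/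
open MeasureTheory Filter

noncomputable section

/-- The plane `ℝ²`. -/
abbrev Plane : Type := EuclideanSpace ℝ (Fin 2)

/-- The `i`-th standard coordinate direction in the plane. -/
def coordDir (i : Fin 2) : Plane := EuclideanSpace.single i (1 : ℝ)

/-- Squared (Euclidean) norm of the gradient of `f` at `x`:
`|∇f(x)|² = ∑ᵢ ‖∂ᵢ f(x)‖²`. -/
def gradNormSq {E : Type*} [NormedAddCommGroup E] [NormedSpace ℝ E]
    (f : Plane → E) (x : Plane) : ℝ :=
  ∑ i : Fin 2, ‖fderiv ℝ f x (coordDir i)‖ ^ 2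

/-- `f` is of class `H¹`: continuously differentiable and `f`, `∇f` square integrable. -/
def IsH1 {E : Type*} [NormedAddCommGroup E] [NormedSpace ℝ E] (f : Plane → E) : Prop :=
  ContDiff ℝ 1 f ∧ Integrable (fun x => ‖f x‖ ^ 2) ∧ Integrable (fun x => gradNormSq f x)

/-- The Laplacian of a real-valued function on the plane. -/
def lap (f : Plane → ℝ) (x : Plane) : ℝ :=
  ∑ i : Fin 2, fderiv ℝ (fun y => fderiv ℝ f y (coordDir i)) x (coordDir i)

/-- The ground state `Q = (2N-1)^{-1/2} Q₀` of the `N`-coupled system. -/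
def groundQ (Q₀ : SchwartzMap Plane ℝ) (N : ℕ) (x : Plane) : ℝ :=
  (Real.sqrt (2 * (N : ℝ) - 1))⁻¹ * Q₀ x

/-- `e^{it}` as a complex number. -/
def mexp (t : ℝ) : ℂ := Complex.exp (Complex.I * (t : ℂ))

/-- Cauchy–Schwarz for integrals of nonneg functions. -/
lemma my_integral_CS {α : Type*} [MeasurableSpace α] {μ : Measure α} {f g : α → ℝ}
    (hf0 : ∀ x, 0 ≤ f x) (hg0 : ∀ x, 0 ≤ g x)
    (hfm : AEStronglyMeasurable f μ) (hgm : AEStronglyMeasurable g μ)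
    (hf : Integrable (fun x => f x ^ 2) μ) (hg : Integrable (fun x => g x ^ 2) μ) :
    ∫ x, f x * g x ∂μ ≤ Real.sqrt (∫ x, f x ^ 2 ∂μ) * Real.sqrt (∫ x, g x ^ 2 ∂μ) := by
  have hpq : Real.HolderConjugate 2 2 := Real.holderConjugate_iff.2 ⟨one_lt_two, by norm_num⟩
  have hf2 : MemLp f (ENNReal.ofReal 2) μ := by
    rw [show ENNReal.ofReal 2 = 2 by norm_num]
    exact (memLp_two_iff_integrable_sq hfm).2 hf
  have hg2 : MemLp g (ENNReal.ofReal 2) μ := by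
    rw [show ENNReal.ofReal 2 = 2 by norm_num]
    exact (memLp_two_iff_integrable_sq hgm).2 hg
  have h := integral_mul_le_Lp_mul_Lq_of_nonneg hpq
    (Eventually.of_forall hf0) (Eventually.of_forall hg0) hf2 hg2
  have e1 : ∀ h : α → ℝ, (∫ x, h x ^ (2:ℝ) ∂μ) = ∫ x, h x ^ 2 ∂μ := by
    intro h; congr 1; funext x; rw [Real.rpow_two]
  rw [e1 f, e1 g] at h
  calc ∫ x, f x * g x ∂μ ≤ (∫ x, f x ^ 2 ∂μ) ^ (1/2:ℝ) * (∫ x, g x ^ 2 ∂μ) ^ (1/2:ℝ) := h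
    _ = Real.sqrt (∫ x, f x ^ 2 ∂μ) * Real.sqrt (∫ x, g x ^ 2 ∂μ) := by
        rw [Real.sqrt_eq_rpow, Real.sqrt_eq_rpow]

/-- Sharp vector-valued Gagliardo–Nirenberg inequality for the finitely
coupled system. -/
theorem sharp_vector_gagliardo_nirenberg_finite
    (Q₀ : SchwartzMap Plane ℝ)
    (hQpos : ∀ x, 0 < Q₀ x)
    (hQrad : ∀ x y : Plane, ‖x‖ = ‖y‖ → Q₀ x = Q₀ y)
    (hQeq : ∀ x, lap (⇑Q₀) x - Q₀ x + Q₀ x ^ 3 = 0)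
    (hGN : ∀ f : Plane → ℂ, IsH1 f →
      (∫ x, ‖f x‖ ^ 4) ≤ 2 * (∫ x, Q₀ x ^ 2)⁻¹ * (∫ x, ‖f x‖ ^ 2) * (∫ x, gradNormSq f x))
    (N : ℕ) (hN : 1 ≤ N)
    (u : Fin N → Plane → ℂ) (hu : ∀ j, IsH1 (u j)) :
    (∫ x, (2 * (∑ j, ‖u j x‖ ^ 2) ^ 2 - ∑ j, ‖u j x‖ ^ 4))
      ≤ 2 * (2 * (N : ℝ) - 1) / (N : ℝ) * (∫ x, Q₀ x ^ 2)⁻¹ *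
          ((∑ j, ∫ x, ‖u j x‖ ^ 2) * (∑ j, ∫ x, gradNormSq (u j) x)) := by
  classical
  have hNpos : (0:ℝ) < N := by exact_mod_cast hN
  set K : ℝ := (∫ x, Q₀ x ^ 2)⁻¹ with hK_def
  have hK0 : 0 ≤ K := by
    have : 0 ≤ ∫ x, Q₀ x ^ 2 := integral_nonneg fun x => sq_nonneg _
    exact inv_nonneg.2 this
  have hcont : ∀ j, Continuous (u j) := fun j => (hu j).1.continuous
  set a : Fin N → Plane → ℝ := fun j x => ‖u j x‖ ^ 2 with ha_def
  have ha0 : ∀ j x, 0 ≤ a j x := fun j x => sq_nonneg _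
  have hacont : ∀ j, Continuous (a j) := fun j => (hcont j).norm.pow 2
  have ha4 : ∀ j x, a j x ^ 2 = ‖u j x‖ ^ 4 := fun j x => by
    simp only [a]; ring
  -- the integrand F
  set F : Plane → ℝ := fun x => 2 * (∑ j, a j x) ^ 2 - ∑ j, ‖u j x‖ ^ 4 with hF_def
  -- masses and gradient energies
  set m : Fin N → ℝ := fun j => ∫ x, ‖u j x‖ ^ 2 with hm_def
  set g : Fin N → ℝ := fun j => ∫ x, gradNormSq (u j) x with hg_def
  have hm0 : ∀ j, 0 ≤ m j := fun j => integral_nonneg fun x => sq_nonneg _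
  have hg0 : ∀ j, 0 ≤ g j := fun j =>
    integral_nonneg fun x => Finset.sum_nonneg fun i _ => sq_nonneg _
  have hM0 : 0 ≤ ∑ j, m j := Finset.sum_nonneg fun j _ => hm0 j
  have hG0 : 0 ≤ ∑ j, g j := Finset.sum_nonneg fun j _ => hg0 j
  -- pointwise: each ‖u j x‖⁴ is dominated by F x
  have hsum_sq : ∀ x, (∑ j, ‖u j x‖ ^ 4) ≤ (∑ j, a j x) ^ 2 := by
    intro x
    have h1 : (∑ j, a j x ^ 2) ≤ (∑ j, a j x) ^ 2 := by
      rw [sq, Finset.sum_mul_sum]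
      refine Finset.sum_le_sum fun j _ => ?_
      refine Finset.single_le_sum (f := fun k => a j x * a k x)
        (fun k _ => mul_nonneg (ha0 j x) (ha0 k x)) (Finset.mem_univ j) |>.trans_eq' ?_
      rw [sq]
    calc (∑ j, ‖u j x‖ ^ 4) = ∑ j, a j x ^ 2 := by
          refine Finset.sum_congr rfl fun j _ => (ha4 j x).symm
      _ ≤ _ := h1
  have hFlb : ∀ j x, ‖u j x‖ ^ 4 ≤ F x := by
    intro j x
    have h2 : a j x ^ 2 ≤ (∑ k, a k x) ^ 2 := by
      have := Finset.single_le_sum (f := fun k => a k x) (fun k _ => ha0 k x)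
        (Finset.mem_univ j)
      exact pow_le_pow_left₀ (ha0 j x) this 2
    have := hsum_sq x
    rw [← ha4 j x]
    simp only [F]
    nlinarith
  have hF0 : ∀ x, 0 ≤ F x := fun x =>
    le_trans (by positivity) (hFlb ⟨0, hN⟩ x)
  by_cases h4 : ∀ j, Integrable (fun x => ‖u j x‖ ^ 4)
  · -- all L⁴ norms finite: the main case
    have h4' : ∀ j, Integrable (fun x => a j x ^ 2) := by
      intro j
      have : (fun x => a j x ^ 2) = fun x => ‖u j x‖ ^ 4 := funext fun x => ha4 j x
      rw [this]; exact h4 j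
    have int_prod : ∀ j k, Integrable (fun x => a j x * a k x) := by
      intro j k
      refine ((h4' j).add (h4' k)).mono'
        ((hacont j).mul (hacont k)).aestronglyMeasurable
        (Eventually.of_forall fun x => ?_)
      simp only [Pi.add_apply]
      rw [Real.norm_of_nonneg (mul_nonneg (ha0 j x) (ha0 k x))]
      nlinarith [sq_nonneg (a j x - a k x), ha0 j x, ha0 k x]
    have hS2eq : (fun x => (∑ j, a j x) ^ 2) = fun x => ∑ j, ∑ k, a j x * a k x :=
      funext fun x => by rw [sq, Finset.sum_mul_sum]
    have int_S2 : Integrable (fun x => (∑ j, a j x) ^ 2) := by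
      rw [hS2eq]
      exact integrable_finset_sum _ fun j _ =>
        integrable_finset_sum _ fun k _ => int_prod j k
    have int_sum4 : Integrable (fun x => ∑ j, ‖u j x‖ ^ 4) :=
      integrable_finset_sum _ fun j _ => h4 j
    -- split the integral
    have hsplit : (∫ x, F x)
        = 2 * (∫ x, (∑ j, a j x) ^ 2) - ∫ x, ∑ j, ‖u j x‖ ^ 4 := by
      simp only [F]
      rw [integral_sub (int_S2.const_mul 2) int_sum4, integral_const_mul]
    -- first estimate: ∫ S² ≤ N ∫ ∑ |u|⁴
    have hI1 : (∫ x, (∑ j, a j x) ^ 2) ≤ (N : ℝ) * ∫ x, ∑ j, ‖u j x‖ ^ 4 := by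
      rw [← integral_const_mul]
      refine integral_mono int_S2 (int_sum4.const_mul _) fun x => ?_
      have h := sq_sum_le_card_mul_sum_sq (s := Finset.univ) (f := fun j => a j x)
      simp only [Finset.card_univ, Fintype.card_fin] at h
      calc (∑ j, a j x) ^ 2 ≤ (N : ℝ) * ∑ j, a j x ^ 2 := h
        _ = (N : ℝ) * ∑ j, ‖u j x‖ ^ 4 := by
            congr 1; exact Finset.sum_congr rfl fun j _ => ha4 j x
    -- second estimate: ∫ S² ≤ 2K (∑ m)(∑ g)
    set b : Fin N → ℝ := fun j => Real.sqrt (∫ x, a j x ^ 2) with hb_def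
    have hb0 : ∀ j, 0 ≤ b j := fun j => Real.sqrt_nonneg _
    have hCSjk : ∀ j k, (∫ x, a j x * a k x) ≤ b j * b k := fun j k =>
      my_integral_CS (ha0 j) (ha0 k) (hacont j).aestronglyMeasurable
        (hacont k).aestronglyMeasurable (h4' j) (h4' k)
    have hI2a : (∫ x, (∑ j, a j x) ^ 2) ≤ (∑ j, b j) ^ 2 := by
      rw [hS2eq, integral_finset_sum _ fun j _ =>
        integrable_finset_sum _ fun k _ => int_prod j k]
      rw [sq, Finset.sum_mul_sum]
      refine Finset.sum_le_sum fun j _ => ?_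
      rw [integral_finset_sum _ fun k _ => int_prod j k]
      exact Finset.sum_le_sum fun k _ => hCSjk j k
    have hbj : ∀ j, b j ≤ Real.sqrt (2 * K) * (Real.sqrt (m j) * Real.sqrt (g j)) := by
      intro j
      have h := hGN (u j) (hu j)
      have h' : (∫ x, a j x ^ 2) ≤ 2 * K * (m j * g j) := by
        have e : (∫ x, a j x ^ 2) = ∫ x, ‖u j x‖ ^ 4 := by
          congr 1; funext x; exact ha4 j x
        rw [e]
        calc (∫ x, ‖u j x‖ ^ 4) ≤ 2 * K * m j * g j := h
          _ = 2 * K * (m j * g j) := by ring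
      calc b j ≤ Real.sqrt (2 * K * (m j * g j)) := Real.sqrt_le_sqrt h'
        _ = Real.sqrt (2 * K) * (Real.sqrt (m j) * Real.sqrt (g j)) := by
            rw [Real.sqrt_mul (by positivity), Real.sqrt_mul (hm0 j)]
    have hbsum : (∑ j, b j)
        ≤ Real.sqrt (2 * K) * (Real.sqrt (∑ j, m j) * Real.sqrt (∑ j, g j)) := by
      calc (∑ j, b j) ≤ ∑ j, Real.sqrt (2 * K) * (Real.sqrt (m j) * Real.sqrt (g j)) :=
            Finset.sum_le_sum fun j _ => hbj j
        _ = Real.sqrt (2 * K) * ∑ j, Real.sqrt (m j) * Real.sqrt (g j) := by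
            rw [Finset.mul_sum]
        _ ≤ Real.sqrt (2 * K) * (Real.sqrt (∑ j, m j) * Real.sqrt (∑ j, g j)) := by
            refine mul_le_mul_of_nonneg_left ?_ (Real.sqrt_nonneg _)
            exact Real.sum_sqrt_mul_sqrt_le _ hm0 hg0
    have hI2 : (∫ x, (∑ j, a j x) ^ 2) ≤ 2 * K * ((∑ j, m j) * (∑ j, g j)) := by
      have hb_sum0 : 0 ≤ ∑ j, b j := Finset.sum_nonneg fun j _ => hb0 j
      calc (∫ x, (∑ j, a j x) ^ 2) ≤ (∑ j, b j) ^ 2 := hI2a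
        _ ≤ (Real.sqrt (2 * K) * (Real.sqrt (∑ j, m j) * Real.sqrt (∑ j, g j))) ^ 2 :=
            pow_le_pow_left₀ hb_sum0 hbsum 2
        _ = 2 * K * ((∑ j, m j) * (∑ j, g j)) := by
            rw [mul_pow, mul_pow, Real.sq_sqrt (by positivity), Real.sq_sqrt hM0,
              Real.sq_sqrt hG0]
    -- put everything together
    have hgoal : (∫ x, F x)
        ≤ 2 * (2 * (N : ℝ) - 1) / (N : ℝ) * K * ((∑ j, m j) * (∑ j, g j)) := by
      rw [hsplit]
      set A := ∫ x, (∑ j, a j x) ^ 2 with hA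
      set B := ∫ x, ∑ j, ‖u j x‖ ^ 4 with hB
      have hA0 : 0 ≤ A := integral_nonneg fun x => sq_nonneg _
      have hcoef : (0:ℝ) ≤ 2 - 1 / N := by
        have : 1 / (N:ℝ) ≤ 1 := by
          rw [div_le_one hNpos]; exact_mod_cast hN
        linarith
      have step1 : 2 * A - B ≤ (2 - 1 / N) * A := by
        have : A / N ≤ B := by
          rw [div_le_iff₀ hNpos]
          calc A ≤ (N:ℝ) * B := hI1
            _ = B * N := by ring
        have hdiv : (2 - 1/(N:ℝ)) * A = 2 * A - A / N := by field_simp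
        rw [hdiv]; linarith
      have step2 : (2 - 1 / (N:ℝ)) * A ≤ (2 - 1 / N) * (2 * K * ((∑ j, m j) * (∑ j, g j))) :=
        mul_le_mul_of_nonneg_left hI2 hcoef
      have heq : (2 - 1 / (N:ℝ)) * (2 * K * ((∑ j, m j) * (∑ j, g j)))
          = 2 * (2 * (N : ℝ) - 1) / (N : ℝ) * K * ((∑ j, m j) * (∑ j, g j)) := by
        field_simp
      linarith [heq ▸ step2]
    exact hgoal
  · -- some ‖u j‖⁴ is not integrable: then F is not integrable and the LHS is 0
    push_neg at h4
    obtain ⟨j, hj⟩ := h4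
    have hFnot : ¬ Integrable F := by
      intro hF
      exact hj (hF.mono' ((hcont j).norm.pow 4).aestronglyMeasurable
        (Eventually.of_forall fun x => by
          rw [Real.norm_of_nonneg (by positivity)]; exact hFlb j x))
    have : (∫ x, F x) = 0 := integral_undef hFnot
    rw [this]
    have hc0 : (0:ℝ) ≤ 2 * (2 * (N : ℝ) - 1) / (N : ℝ) := by
      have h1 : (1:ℝ) ≤ N := by exact_mod_cast hN
      have : (0:ℝ) ≤ 2 * (N:ℝ) - 1 := by linarith
      positivity
    exact mul_nonneg (mul_nonneg hc0 hK0) (mul_nonneg hM0 hG0)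
end
end

section
/- Sharp Gagliardo–Nirenberg inequality for the infinitely coupled system: let (u_j)_{j∈ℤ} be a family of H¹ functions u_j : ℝ² → ℂ with ∑_{j∈ℤ} ∫_{ℝ²}(|u_j|² + |∇u_j|²) dx < ∞. Then ∫_{ℝ²} ( 2(∑_{j∈ℤ}|u_j(x)|²)² − ∑_{j∈ℤ}|u_j(x)|⁴ ) dx ≤ 4‖Q₀‖_{L²}^{−2} · (∑_{j∈ℤ}∫_{ℝ²}|∇u_j|² dx) · (∑_{j∈ℤ}∫_{ℝ²}|u_j|² dx). -/
open MeasureTheory Filter Topology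

noncomputable section

/-- Helper: for nonnegative terms, the sum of squares is at most the square of the sum. -/
lemma aux_sum_sq_le_sq_sum {s : Finset ℤ} {f : ℤ → ℝ} (h : ∀ i, 0 ≤ f i) :
    ∑ i ∈ s, f i ^ 2 ≤ (∑ i ∈ s, f i) ^ 2 := by
  calc ∑ i ∈ s, f i ^ 2 ≤ ∑ i ∈ s, f i * ∑ j ∈ s, f j := by
        refine Finset.sum_le_sum fun i hi => ?_
        rw [pow_two]
        exact mul_le_mul_of_nonneg_left (Finset.single_le_sum (fun j _ => h j) hi) (h i)
    _ = (∑ i ∈ s, f i) ^ 2 := by rw [← Finset.sum_mul, pow_two]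

/-- Sharp Gagliardo–Nirenberg inequality for the infinitely coupled system. -/
theorem sharp_gagliardo_nirenberg_infinite
    (Q₀ : SchwartzMap Plane ℝ)
    (hQpos : ∀ x, 0 < Q₀ x)
    (hQrad : ∀ x y : Plane, ‖x‖ = ‖y‖ → Q₀ x = Q₀ y)
    (hQeq : ∀ x, lap (⇑Q₀) x - Q₀ x + Q₀ x ^ 3 = 0)
    (hGN : ∀ f : Plane → ℂ, IsH1 f →
      (∫ x, ‖f x‖ ^ 4) ≤ 2 * (∫ x, Q₀ x ^ 2)⁻¹ * (∫ x, ‖f x‖ ^ 2) * (∫ x, gradNormSq f x))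
    (u : ℤ → Plane → ℂ) (hu : ∀ j, IsH1 (u j))
    (hsum : Summable (fun j : ℤ => ∫ x, (‖u j x‖ ^ 2 + gradNormSq (u j) x))) :
    (∫ x, (2 * (∑' j : ℤ, ‖u j x‖ ^ 2) ^ 2 - ∑' j : ℤ, ‖u j x‖ ^ 4))
      ≤ 4 * (∫ x, Q₀ x ^ 2)⁻¹ * (∑' j : ℤ, ∫ x, gradNormSq (u j) x) *
          (∑' j : ℤ, ∫ x, ‖u j x‖ ^ 2) := by
  classical
  set c : ℝ := (∫ x, Q₀ x ^ 2)⁻¹ with hc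
  have hc0 : 0 ≤ c := inv_nonneg.mpr (integral_nonneg fun x => sq_nonneg _)
  set a : ℤ → Plane → ℝ := fun j x => ‖u j x‖ ^ 2 with ha
  have ha0 : ∀ j x, 0 ≤ a j x := fun j x => pow_nonneg (norm_nonneg _) 2
  have hacont : ∀ j, Continuous (a j) := fun j => ((hu j).1.continuous.norm).pow 2
  have haint : ∀ j, Integrable (a j) := fun j => (hu j).2.1
  set M : ℤ → ℝ := fun j => ∫ x, a j x with hM
  set K : ℤ → ℝ := fun j => ∫ x, gradNormSq (u j) x with hK
  have hM0 : ∀ j, 0 ≤ M j := fun j => integral_nonneg fun x => ha0 j x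
  have hK0 : ∀ j, 0 ≤ K j := fun j =>
    integral_nonneg fun x => Finset.sum_nonneg fun i _ => pow_nonneg (norm_nonneg _) 2
  have hsum' : Summable (fun j => M j + K j) :=
    hsum.congr fun j => integral_add (haint j) (hu j).2.2
  have hMsum : Summable M :=
    hsum'.of_nonneg_of_le hM0 (fun j => le_add_of_nonneg_right (hK0 j))
  have hKsum : Summable K :=
    hsum'.of_nonneg_of_le hK0 (fun j => le_add_of_nonneg_left (hM0 j))
  set A : ℝ := ∑' j, K j with hA
  set B : ℝ := ∑' j, M j with hB
  have hA0 : 0 ≤ A := tsum_nonneg hK0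
  have hB0 : 0 ≤ B := tsum_nonneg hM0
  set g : Plane → ℝ := fun x => 2 * (∑' j, a j x) ^ 2 - ∑' j, (a j x) ^ 2 with hg
  -- rewrite the left-hand side integral
  have hgoalL : (∫ x, (2 * (∑' j : ℤ, ‖u j x‖ ^ 2) ^ 2 - ∑' j : ℤ, ‖u j x‖ ^ 4))
      = ∫ x, g x := by
    refine integral_congr_ae (Eventually.of_forall fun x => ?_)
    have h4 : ∀ j : ℤ, ‖u j x‖ ^ 4 = (a j x) ^ 2 := fun j => by
      simp only [ha]; ring
    simp only [hg, ha, tsum_congr h4]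
  -- the goal reduces to `∫ g ≤ 4 * c * A * B`
  rw [hgoalL]
  have hRHS0 : 0 ≤ 4 * c * A * B := by positivity
  -- a.e. summability of `a · x`
  have hmeas : ∀ j, Measurable (a j) := fun j => (hacont j).measurable
  have hae : ∀ᵐ x : Plane, Summable fun j => a j x := by
    have h1 : (∫⁻ x, ∑' j, ENNReal.ofReal (a j x)) ≠ ⊤ := by
      rw [lintegral_tsum fun j => ((hmeas j).ennreal_ofReal).aemeasurable]
      have h2 : ∀ j, (∫⁻ x, ENNReal.ofReal (a j x)) = ENNReal.ofReal (M j) := fun j =>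
        (ofReal_integral_eq_lintegral_ofReal (haint j) (Eventually.of_forall (ha0 j))).symm
      simp_rw [h2]
      rw [← ENNReal.ofReal_tsum_of_nonneg hM0 hMsum]
      exact ENNReal.ofReal_ne_top
    have h3 := ae_lt_top (Measurable.ennreal_tsum fun j => (hmeas j).ennreal_ofReal) h1
    filter_upwards [h3] with x hx
    refine (ENNReal.summable_toReal hx.ne).congr fun j => ?_
    simp [ENNReal.toReal_ofReal (ha0 j x)]
  by_cases hgint : Integrable g
  swap
  · rw [integral_undef hgint]; exact hRHS0
  -- products are integrable
  have hprod : ∀ j k : ℤ, Integrable fun x => a j x * a k x := by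
    intro j k
    refine hgint.mono' ((hacont j).mul (hacont k)).aestronglyMeasurable ?_
    filter_upwards [hae] with x hx
    have hS0 : 0 ≤ ∑' i, a i x := tsum_nonneg fun i => ha0 i x
    have hj : a j x ≤ ∑' i, a i x := Summable.le_tsum hx j fun i _ => ha0 i x
    have hk : a k x ≤ ∑' i, a i x := Summable.le_tsum hx k fun i _ => ha0 i x
    have hsq : Summable fun i => (a i x) ^ 2 := by
      refine (hx.mul_left (∑' i, a i x)).of_nonneg_of_le (fun i => sq_nonneg _) fun i => ?_
      rw [pow_two]
      exact mul_le_mul_of_nonneg_right (Summable.le_tsum hx i fun i' _ => ha0 i' x) (ha0 i x)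
    have hT : (∑' i, (a i x) ^ 2) ≤ (∑' i, a i x) ^ 2 := by
      refine Summable.tsum_le_of_sum_le hsq fun s => ?_
      calc ∑ i ∈ s, (a i x) ^ 2 ≤ (∑ i ∈ s, a i x) ^ 2 := aux_sum_sq_le_sq_sum (ha0 · x)
        _ ≤ (∑' i, a i x) ^ 2 := by
            have := Summable.sum_le_tsum s (fun i _ => ha0 i x) hx
            have h0 : 0 ≤ ∑ i ∈ s, a i x := Finset.sum_nonneg fun i _ => ha0 i x
            nlinarith
    rw [Real.norm_of_nonneg (mul_nonneg (ha0 j x) (ha0 k x))]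
    simp only [hg]
    nlinarith [mul_le_mul hj hk (ha0 k x) hS0]
  have hsqint : ∀ j, Integrable fun x => (a j x) ^ 2 := fun j =>
    (hprod j j).congr (Eventually.of_forall fun x => (pow_two (a j x)).symm)
  -- Cauchy–Schwarz in L²
  set b : ℤ → ℝ := fun j => Real.sqrt (∫ x, (a j x) ^ 2) with hb
  have hb0 : ∀ j, 0 ≤ b j := fun j => Real.sqrt_nonneg _
  have haL2 : ∀ j, MemLp (a j) 2 volume := fun j =>
    (memLp_two_iff_integrable_sq (hacont j).aestronglyMeasurable).2 (hsqint j)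
  have haL2' : ∀ j, MemLp (a j) (ENNReal.ofReal 2) volume := fun j => by
    rw [show ENNReal.ofReal (2 : ℝ) = 2 by norm_num]; exact haL2 j
  have hCS : ∀ j k, (∫ x, a j x * a k x) ≤ b j * b k := by
    intro j k
    have h2 : (2 : ℝ).HolderConjugate 2 := Real.HolderConjugate.two_two
    have hH := integral_mul_le_Lp_mul_Lq_of_nonneg h2 (Eventually.of_forall (ha0 j))
      (Eventually.of_forall (ha0 k)) (haL2' j) (haL2' k)
    calc (∫ x, a j x * a k x)
        ≤ (∫ x, a j x ^ (2 : ℝ)) ^ (1 / (2 : ℝ)) * (∫ x, a k x ^ (2 : ℝ)) ^ (1 / (2 : ℝ)) := hH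
      _ = b j * b k := by
          have hr : ∀ i : ℤ, (∫ x, a i x ^ (2 : ℝ)) = ∫ x, (a i x) ^ 2 := fun i => by
            simp_rw [show ∀ r : ℝ, r ^ (2 : ℝ) = r ^ 2 from fun r => by
              rw [show ((2 : ℝ) = ((2 : ℕ) : ℝ)) by norm_num, Real.rpow_natCast]]
          rw [hr j, hr k, hb, ← Real.sqrt_eq_rpow, ← Real.sqrt_eq_rpow]
  -- per-index Gagliardo–Nirenberg bound
  have hbsq : ∀ j, b j ^ 2 ≤ 2 * c * M j * K j := by
    intro j
    have h4 : (∫ x, (a j x) ^ 2) = ∫ x, ‖u j x‖ ^ 4 := by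
      refine integral_congr_ae (Eventually.of_forall fun x => ?_)
      simp only [ha]; ring
    have hGNj := hGN (u j) (hu j)
    rw [hb, Real.sq_sqrt (integral_nonneg fun x => sq_nonneg _), h4]
    exact hGNj
  have hble : ∀ j, b j ≤ Real.sqrt (2 * c * M j) * Real.sqrt (K j) := fun j => by
    rw [← Real.sqrt_mul (by positivity) (K j), ← Real.sqrt_sq (hb0 j)]
    exact Real.sqrt_le_sqrt (hbsq j)
  -- integrability of finite partial sums
  have hint1 : ∀ s : Finset ℤ, Integrable fun x => (∑ j ∈ s, a j x) ^ 2 := by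
    intro s
    have hfe : (fun x => (∑ j ∈ s, a j x) ^ 2)
        = fun x => ∑ j ∈ s, ∑ k ∈ s, a j x * a k x := by
      funext x; rw [pow_two, Finset.sum_mul_sum]
    rw [hfe]
    exact integrable_finset_sum _ fun j _ => integrable_finset_sum _ fun k _ => hprod j k
  have hint2 : ∀ s : Finset ℤ, Integrable fun x => ∑ j ∈ s, (a j x) ^ 2 := fun s =>
    integrable_finset_sum _ fun j _ => hsqint j
  -- the key finite-system bound
  have hfin : ∀ s : Finset ℤ,
      (∫ x, (2 * (∑ j ∈ s, a j x) ^ 2 - ∑ j ∈ s, (a j x) ^ 2)) ≤ 4 * c * A * B := by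
    intro s
    have step1 : (∫ x, (2 * (∑ j ∈ s, a j x) ^ 2 - ∑ j ∈ s, (a j x) ^ 2))
        ≤ ∫ x, 2 * (∑ j ∈ s, a j x) ^ 2 := by
      refine integral_mono (((hint1 s).const_mul 2).sub (hint2 s)) ((hint1 s).const_mul 2)
        fun x => ?_
      have : 0 ≤ ∑ j ∈ s, (a j x) ^ 2 := Finset.sum_nonneg fun j _ => sq_nonneg _
      simp only
      linarith
    have step2 : (∫ x, 2 * (∑ j ∈ s, a j x) ^ 2)
        = 2 * ∑ j ∈ s, ∑ k ∈ s, ∫ x, a j x * a k x := by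
      rw [integral_const_mul]
      congr 1
      have hfe : (fun x => (∑ j ∈ s, a j x) ^ 2)
          = fun x => ∑ j ∈ s, ∑ k ∈ s, a j x * a k x := by
        funext x; rw [pow_two, Finset.sum_mul_sum]
      rw [hfe, integral_finset_sum _ fun j _ =>
        integrable_finset_sum _ fun k _ => hprod j k]
      exact Finset.sum_congr rfl fun j _ =>
        integral_finset_sum _ fun k _ => hprod j k
    have step3 : (∑ j ∈ s, ∑ k ∈ s, ∫ x, a j x * a k x) ≤ (∑ j ∈ s, b j) ^ 2 := by
      calc (∑ j ∈ s, ∑ k ∈ s, ∫ x, a j x * a k x)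
          ≤ ∑ j ∈ s, ∑ k ∈ s, b j * b k :=
            Finset.sum_le_sum fun j _ => Finset.sum_le_sum fun k _ => hCS j k
        _ = (∑ j ∈ s, b j) ^ 2 := by rw [pow_two, Finset.sum_mul_sum]
    have step4 : (∑ j ∈ s, b j) ^ 2 ≤ 2 * c * B * A := by
      have h0 : 0 ≤ ∑ j ∈ s, b j := Finset.sum_nonneg fun j _ => hb0 j
      have h1 : (∑ j ∈ s, b j) ≤ ∑ j ∈ s, Real.sqrt (2 * c * M j) * Real.sqrt (K j) :=
        Finset.sum_le_sum fun j _ => hble j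
      have h2 : (∑ j ∈ s, Real.sqrt (2 * c * M j) * Real.sqrt (K j)) ^ 2
          ≤ (∑ j ∈ s, Real.sqrt (2 * c * M j) ^ 2) * ∑ j ∈ s, Real.sqrt (K j) ^ 2 :=
        Finset.sum_mul_sq_le_sq_mul_sq s _ _
      have h3 : (∑ j ∈ s, Real.sqrt (2 * c * M j) ^ 2) = 2 * c * ∑ j ∈ s, M j :=
        (Finset.sum_congr rfl fun j _ => Real.sq_sqrt (by positivity)).trans
          (Finset.mul_sum s M (2 * c)).symm
      have h4 : (∑ j ∈ s, Real.sqrt (K j) ^ 2) = ∑ j ∈ s, K j :=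
        Finset.sum_congr rfl fun j _ => Real.sq_sqrt (hK0 j)
      have h5 : ∑ j ∈ s, M j ≤ B := Summable.sum_le_tsum s (fun j _ => hM0 j) hMsum
      have h6 : ∑ j ∈ s, K j ≤ A := Summable.sum_le_tsum s (fun j _ => hK0 j) hKsum
      have h7 : 0 ≤ ∑ j ∈ s, K j := Finset.sum_nonneg fun j _ => hK0 j
      have h8 : 0 ≤ ∑ j ∈ s, M j := Finset.sum_nonneg fun j _ => hM0 j
      calc (∑ j ∈ s, b j) ^ 2
          ≤ (∑ j ∈ s, Real.sqrt (2 * c * M j) * Real.sqrt (K j)) ^ 2 :=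
            pow_le_pow_left₀ h0 h1 2
        _ ≤ (∑ j ∈ s, Real.sqrt (2 * c * M j) ^ 2) * ∑ j ∈ s, Real.sqrt (K j) ^ 2 := h2
        _ = (2 * c * ∑ j ∈ s, M j) * ∑ j ∈ s, K j := by rw [h3, h4]
        _ ≤ 2 * c * B * A := by
            have := mul_le_mul (mul_le_mul_of_nonneg_left h5 (by positivity : (0:ℝ) ≤ 2 * c))
              h6 h7 (by positivity : (0:ℝ) ≤ 2 * c * B)
            linarith
    calc (∫ x, (2 * (∑ j ∈ s, a j x) ^ 2 - ∑ j ∈ s, (a j x) ^ 2))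
        ≤ ∫ x, 2 * (∑ j ∈ s, a j x) ^ 2 := step1
      _ = 2 * ∑ j ∈ s, ∑ k ∈ s, ∫ x, a j x * a k x := step2
      _ ≤ 2 * (∑ j ∈ s, b j) ^ 2 := by linarith [step3]
      _ ≤ 2 * (2 * c * B * A) := by linarith [step4]
      _ = 4 * c * A * B := by ring
  -- exhaust ℤ by finite intervals and apply monotone convergence
  set F : ℕ → Finset ℤ := fun n => Finset.Icc (-(n : ℤ)) (n : ℤ) with hF
  have hFmono : Monotone F := fun m n hmn => Finset.Icc_subset_Icc (by omega) (by omega)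
  have hFtend : Tendsto F atTop atTop := by
    refine tendsto_atTop_finset_of_monotone hFmono fun j => ⟨j.natAbs, ?_⟩
    simp only [hF, Finset.mem_Icc]
    omega
  set h : ℕ → Plane → ℝ :=
    fun n x => 2 * (∑ j ∈ F n, a j x) ^ 2 - ∑ j ∈ F n, (a j x) ^ 2 with hh
  have hhint : ∀ n, Integrable (h n) := fun n =>
    ((hint1 (F n)).const_mul 2).sub (hint2 (F n))
  have hhmono : ∀ x : Plane, Monotone fun n => h n x := by
    intro x m n hmn
    have hsub := hFmono hmn
    simp only [hh]
    have hsplit : ∑ j ∈ F n, a j x = ∑ j ∈ F m, a j x + ∑ j ∈ F n \ F m, a j x := by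
      rw [add_comm, Finset.sum_sdiff hsub]
    have hsplit2 : ∑ j ∈ F n, (a j x) ^ 2
        = ∑ j ∈ F m, (a j x) ^ 2 + ∑ j ∈ F n \ F m, (a j x) ^ 2 := by
      rw [add_comm, Finset.sum_sdiff hsub]
    have hD0 : 0 ≤ ∑ j ∈ F n \ F m, a j x := Finset.sum_nonneg fun j _ => ha0 j x
    have hP0 : 0 ≤ ∑ j ∈ F m, a j x := Finset.sum_nonneg fun j _ => ha0 j x
    have hDsq : ∑ j ∈ F n \ F m, (a j x) ^ 2 ≤ (∑ j ∈ F n \ F m, a j x) ^ 2 :=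
      aux_sum_sq_le_sq_sum (ha0 · x)
    rw [hsplit, hsplit2]
    nlinarith
  have hhtend : ∀ᵐ x : Plane, Tendsto (fun n => h n x) atTop (𝓝 (g x)) := by
    filter_upwards [hae] with x hx
    have hsq : Summable fun i => (a i x) ^ 2 := by
      refine (hx.mul_left (∑' i, a i x)).of_nonneg_of_le (fun i => sq_nonneg _) fun i => ?_
      rw [pow_two]
      exact mul_le_mul_of_nonneg_right (Summable.le_tsum hx i fun i' _ => ha0 i' x) (ha0 i x)
    have t1 : Tendsto (fun n => ∑ j ∈ F n, a j x) atTop (𝓝 (∑' j, a j x)) :=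
      hx.hasSum.comp hFtend
    have t2 : Tendsto (fun n => ∑ j ∈ F n, (a j x) ^ 2) atTop (𝓝 (∑' j, (a j x) ^ 2)) :=
      hsq.hasSum.comp hFtend
    simpa only [hh, hg] using ((t1.pow 2).const_mul 2).sub t2
  have hlim := integral_tendsto_of_tendsto_of_monotone hhint hgint
    (Eventually.of_forall hhmono) hhtend
  exact le_of_tendsto hlim (Eventually.of_forall fun n => hfin (F n))
end
end

section
/- Null space of the linearized operator L₊ for the N-coupled system (Lemma 3.4): let N ≥ 2 and assume (i) every twice continuously differentiable real function r on ℝ² with r and ∇r square-integrable solving Δr − r + 3Q₀²r = 0 is a linear combination of ∂_{x₁}Q₀ and ∂_{x₂}Q₀, and (ii) ∫_{ℝ²}(|∇h|² + h² − Q₀²h²) dx ≥ 0 for every real H¹ function h. Let r₁,…,r_N be twice continuously differentiable real functions with r_j and ∇r_j square-integrable satisfying, for every j ∈ {1,…,N}, Δr_j − r_j + (2N+1)Q²r_j + 4Q²∑_{k≠j} r_k = 0 on ℝ². Then r₁ = r₂ = ⋯ = r_N, and there exist constants c₁, c₂ ∈ ℝ such that r_j = c₁∂_{x₁}Q₀ +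 c₂∂_{x₂}Q₀ for every j. -/
open MeasureTheory Filter Topology

noncomputable section

section AuxLemmas

lemma contDeriv (u : Plane → ℝ) (hu : ContDiff ℝ 2 u) (w : Plane) :
    Continuous (fun x => fderiv ℝ u x w) :=
  (ContinuousLinearMap.apply ℝ ℝ w).continuous.comp
    (hu.fderiv_right (m := 1) (by norm_num)).continuous

lemma contDiffDeriv (u : Plane → ℝ) (hu : ContDiff ℝ 2 u) (w : Plane) :
    ContDiff ℝ 1 (fun x => fderiv ℝ u x w) :=
  (ContinuousLinearMap.apply ℝ ℝ w).contDiff.comp (hu.fderiv_right (m := 1) (by norm_num))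

lemma contDeriv2 (u : Plane → ℝ) (hu : ContDiff ℝ 2 u) (w w' : Plane) :
    Continuous (fun x => fderiv ℝ (fun y => fderiv ℝ u y w) x w') :=
  (ContinuousLinearMap.apply ℝ ℝ w').continuous.comp
    ((contDiffDeriv u hu w).fderiv_right (m := 0) (by norm_num)).continuous

lemma cutoff_ibp (d : Plane → ℝ) (hd : ContDiff ℝ 2 d)
    (χ : Plane → ℝ) (hχ : ContDiff ℝ 2 χ) (hχs : HasCompactSupport χ) :
    ∫ x, χ x * (d x * lap d x + gradNormSq d x) =
      - ∫ x, d x * ∑ i : Fin 2, fderiv ℝ χ x (coordDir i) * fderiv ℝ d x (coordDir i) := by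
  set v := coordDir with hv
  have hdd : Differentiable ℝ d := hd.differentiable two_ne_zero
  have hχd : Differentiable ℝ χ := hχ.differentiable two_ne_zero
  have hdc : Continuous d := hd.continuous
  have hχc : Continuous χ := hχ.continuous
  -- IBP for each coordinate
  have key : ∀ i : Fin 2,
      ∫ x, (χ x * d x) * fderiv ℝ (fun y => fderiv ℝ d y (v i)) x (v i)
        = - ∫ x, (χ x * fderiv ℝ d x (v i) + d x * fderiv ℝ χ x (v i))
            * fderiv ℝ d x (v i) := by
    intro i
    have hf2 : ContDiff ℝ 2 (fun x => χ x * d x) := hχ.mul hd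
    have hfs : HasCompactSupport (fun x => χ x * d x) := hχs.mul_right
    have h1 : Integrable (fun x =>
        fderiv ℝ (fun y => χ y * d y) x (v i) * fderiv ℝ d x (v i)) := by
      exact ((contDeriv _ hf2 (v i)).mul (contDeriv d hd (v i))).integrable_of_hasCompactSupport
        ((hfs.fderiv_apply ℝ (v i)).mul_right)
    have h2 : Integrable (fun x =>
        (χ x * d x) * fderiv ℝ (fun y => fderiv ℝ d y (v i)) x (v i)) := by
      exact ((hχc.mul hdc).mul (contDeriv2 d hd (v i) (v i))).integrable_of_hasCompactSupport
        (hfs.mul_right)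
    have h3 : Integrable (fun x => (χ x * d x) * fderiv ℝ d x (v i)) := by
      exact ((hχc.mul hdc).mul (contDeriv d hd (v i))).integrable_of_hasCompactSupport
        (hfs.mul_right)
    have := integral_mul_fderiv_eq_neg_fderiv_mul_of_integrable h1 h2 h3
      (fun x _ => hf2.differentiable two_ne_zero x) (fun x _ => (contDiffDeriv d hd (v i)).differentiable one_ne_zero x)
    rw [this]
    congr 1
    apply integral_congr_ae
    filter_upwards with x
    rw [fderiv_fun_mul (hχd x) (hdd x)]
    simp [mul_comm, mul_add, add_mul, mul_assoc]
  have hgc : ∀ i : Fin 2, Continuous fun x => fderiv ℝ d x (v i) := fun i => contDeriv d hd (v i)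
  have hcc : ∀ i : Fin 2, Continuous fun x => fderiv ℝ χ x (v i) := fun i => contDeriv χ hχ (v i)
  have hfs : HasCompactSupport (fun x => χ x * d x) := hχs.mul_right
  have hPi : ∀ i : Fin 2, Integrable (fun x =>
      (χ x * d x) * fderiv ℝ (fun y => fderiv ℝ d y (v i)) x (v i)) := fun i =>
    ((hχc.mul hdc).mul (contDeriv2 d hd (v i) (v i))).integrable_of_hasCompactSupport
      (hfs.mul_right)
  have hQi : ∀ i : Fin 2, Integrable (fun x =>
      (χ x * fderiv ℝ d x (v i) + d x * fderiv ℝ χ x (v i)) * fderiv ℝ d x (v i)) := fun i =>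
    (((hχc.mul (hgc i)).add (hdc.mul (hcc i))).mul (hgc i)).integrable_of_hasCompactSupport
      ((hχs.mul_right.add ((hχs.fderiv_apply ℝ (v i)).mul_left)).mul_right)
  have hRi : ∀ i : Fin 2, Integrable (fun x =>
      d x * (fderiv ℝ χ x (v i) * fderiv ℝ d x (v i))) := fun i =>
    (hdc.mul ((hcc i).mul (hgc i))).integrable_of_hasCompactSupport
      (((hχs.fderiv_apply ℝ (v i)).mul_right).mul_left)
  have hPQ : ∀ i : Fin 2, Integrable (fun x =>
      (χ x * d x) * fderiv ℝ (fun y => fderiv ℝ d y (v i)) x (v i)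
      + (χ x * fderiv ℝ d x (v i) + d x * fderiv ℝ χ x (v i)) * fderiv ℝ d x (v i)) :=
    fun i => (hPi i).add (hQi i)
  have hBig : ∀ i : Fin 2, Integrable (fun x =>
      (χ x * d x) * fderiv ℝ (fun y => fderiv ℝ d y (v i)) x (v i)
      + (χ x * fderiv ℝ d x (v i) + d x * fderiv ℝ χ x (v i)) * fderiv ℝ d x (v i)
      - d x * (fderiv ℝ χ x (v i) * fderiv ℝ d x (v i))) :=
    fun i => (hPQ i).sub (hRi i)
  have step1 : ∫ x, χ x * (d x * lap d x + gradNormSq d x)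
      = ((∫ x, (χ x * d x) * fderiv ℝ (fun y => fderiv ℝ d y (v 0)) x (v 0))
          + (∫ x, (χ x * fderiv ℝ d x (v 0) + d x * fderiv ℝ χ x (v 0)) * fderiv ℝ d x (v 0))
          - (∫ x, d x * (fderiv ℝ χ x (v 0) * fderiv ℝ d x (v 0))))
        + ((∫ x, (χ x * d x) * fderiv ℝ (fun y => fderiv ℝ d y (v 1)) x (v 1))
          + (∫ x, (χ x * fderiv ℝ d x (v 1) + d x * fderiv ℝ χ x (v 1)) * fderiv ℝ d x (v 1))
          - (∫ x, d x * (fderiv ℝ χ x (v 1) * fderiv ℝ d x (v 1)))) := by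
    rw [← integral_add (hPi 0) (hQi 0), ← integral_sub (hPQ 0) (hRi 0),
      ← integral_add (hPi 1) (hQi 1), ← integral_sub (hPQ 1) (hRi 1),
      ← integral_add (hBig 0) (hBig 1)]
    apply integral_congr_ae
    filter_upwards with x
    simp only [lap, gradNormSq, Fin.sum_univ_two, Real.norm_eq_abs, sq_abs]
    ring
  have step2 : ∫ x, d x * ∑ i : Fin 2, fderiv ℝ χ x (coordDir i) * fderiv ℝ d x (coordDir i)
      = (∫ x, d x * (fderiv ℝ χ x (v 0) * fderiv ℝ d x (v 0)))
        + (∫ x, d x * (fderiv ℝ χ x (v 1) * fderiv ℝ d x (v 1))) := by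
    rw [← integral_add (hRi 0) (hRi 1)]
    apply integral_congr_ae
    filter_upwards with x
    simp only [Fin.sum_univ_two, ← hv]
    ring
  rw [step1, step2]
  linarith [key 0, key 1]


lemma exists_cutoffs : ∃ (χ : ℕ → Plane → ℝ) (M : ℝ), 0 ≤ M ∧
    (∀ n, ContDiff ℝ 2 (χ n)) ∧ (∀ n, HasCompactSupport (χ n)) ∧
    (∀ n x, 0 ≤ χ n x) ∧ (∀ n x, χ n x ≤ 1) ∧
    (∀ n : ℕ, ∀ x : Plane, ‖x‖ ≤ (n : ℝ) + 1 → χ n x = 1) ∧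
    (∀ n : ℕ, ∀ x w : Plane, |fderiv ℝ (χ n) x w| ≤ ((n : ℝ) + 1)⁻¹ * M * ‖w‖) := by
  set ψ : ContDiffBump (0 : Plane) := ⟨1, 2, one_pos, one_lt_two⟩ with hψ
  have hψc : ContDiff ℝ 2 ψ := ψ.contDiff
  have hψd1 : ContDiff ℝ 1 (fderiv ℝ ψ) := (ContDiffBump.contDiff ψ (n := 2)).fderiv_right
    (m := 1) (by norm_num)
  obtain ⟨M, hM⟩ := (ψ.hasCompactSupport.fderiv (𝕜 := ℝ)).exists_bound_of_continuous
    hψd1.continuous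
  have hM0 : 0 ≤ M := le_trans (norm_nonneg _) (hM 0)
  set L : ℕ → Plane →L[ℝ] Plane := fun n => ((n : ℝ) + 1)⁻¹ • ContinuousLinearMap.id ℝ Plane
    with hL
  have ha : ∀ n : ℕ, (0 : ℝ) < (n : ℝ) + 1 := fun n => by positivity
  have hLx : ∀ n x, L n x = ((n : ℝ) + 1)⁻¹ • x := fun n x => rfl
  have hLn : ∀ n (x : Plane), ‖L n x‖ = ((n : ℝ) + 1)⁻¹ * ‖x‖ := by
    intro n x
    rw [hLx, norm_smul, Real.norm_eq_abs, abs_of_pos (by positivity)]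
  refine ⟨fun n x => ψ (L n x), M, hM0, ?_, ?_, ?_, ?_, ?_, ?_⟩
  · exact fun n => hψc.comp (L n).contDiff
  · intro n
    apply HasCompactSupport.intro (isCompact_closedBall (0 : Plane) (2 * ((n : ℝ) + 1)))
    intro x hx
    apply ψ.zero_of_le_dist
    simp only [Metric.mem_closedBall, not_le, dist_zero_right] at hx
    have h2 : ψ.rOut = 2 := rfl
    rw [h2, dist_zero_right, hLn, inv_mul_eq_div, le_div_iff₀ (ha n)]
    linarith
  · exact fun n x => ψ.nonneg
  · exact fun n x => ψ.le_one
  · intro n x hx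
    apply ψ.one_of_mem_closedBall
    have h1 : ψ.rIn = 1 := rfl
    rw [Metric.mem_closedBall, dist_zero_right, hLn, h1, inv_mul_eq_div,
      div_le_one (ha n)]
    exact hx
  · intro n x w
    have hdiff : HasFDerivAt (fun y => ψ (L n y)) ((fderiv ℝ ψ (L n x)).comp (L n)) x :=
      ((ψ.contDiff (n := 1)).differentiable (by simp) (L n x)).hasFDerivAt.comp x
        (L n).hasFDerivAt
    rw [hdiff.fderiv]
    calc |((fderiv ℝ ψ (L n x)).comp (L n)) w| = ‖fderiv ℝ ψ (L n x) (L n w)‖ := by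
          rw [Real.norm_eq_abs]; rfl
    _ ≤ ‖fderiv ℝ ψ (L n x)‖ * ‖L n w‖ := (fderiv ℝ ψ (L n x)).le_opNorm _
    _ ≤ M * (((n : ℝ) + 1)⁻¹ * ‖w‖) := by
        rw [hLn]
        exact mul_le_mul (hM _) le_rfl (by positivity) hM0
    _ = ((n : ℝ) + 1)⁻¹ * M * ‖w‖ := by ring


lemma gradNormSq_eq (d : Plane → ℝ) (x : Plane) :
    gradNormSq d x = ∑ i : Fin 2, (fderiv ℝ d x (coordDir i)) ^ 2 := by
  simp [gradNormSq, Real.norm_eq_abs, sq_abs]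

lemma norm_coordDir (i : Fin 2) : ‖coordDir i‖ = 1 := by
  simp [coordDir, EuclideanSpace.norm_single]

lemma key_vanish (Q₀ : SchwartzMap Plane ℝ) (hQpos : ∀ x, 0 < Q₀ x)
    (hLminus : ∀ h : Plane → ℝ, IsH1 h →
      0 ≤ ∫ x, (gradNormSq h x + h x ^ 2 - Q₀ x ^ 2 * h x ^ 2))
    {c : ℝ} (hc : c < 1)
    (d : Plane → ℝ) (hd : ContDiff ℝ 2 d)
    (hdi : Integrable (fun x => d x ^ 2))
    (hdgi : Integrable (fun x => gradNormSq d x))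
    (hpde : ∀ x, lap d x - d x + c * Q₀ x ^ 2 * d x = 0) :
    ∀ x, d x = 0 := by
  obtain ⟨χ, M, hM0, hC2, hCS, hge0, hle1, hone, hder⟩ := exists_cutoffs
  have hdc : Continuous d := hd.continuous
  have hQc : Continuous (⇑Q₀) := Q₀.continuous
  have hgc : ∀ i : Fin 2, Continuous fun x => fderiv ℝ d x (coordDir i) :=
    fun i => contDeriv d hd (coordDir i)
  have hgradc : Continuous (fun x => gradNormSq d x) := by
    exact continuous_finset_sum _ (fun i _ => ((hgc i).norm.pow 2))
  obtain ⟨CQ, hCQ⟩ : ∃ C, ∀ x, ‖Q₀ x‖ ≤ C := by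
    obtain ⟨C, -, hC⟩ := Q₀.decay 0 0
    exact ⟨C, fun x => by simpa using hC x⟩
  have hQ2d2 : Integrable (fun x => Q₀ x ^ 2 * d x ^ 2) := by
    apply hdi.bdd_mul (c := CQ ^ 2) ((hQc.pow 2).aestronglyMeasurable)
    refine ae_of_all _ (fun x => ?_)
    rw [Real.norm_eq_abs, Pi.pow_apply, abs_pow]
    exact pow_le_pow_left₀ (abs_nonneg _) (by simpa [Real.norm_eq_abs] using hCQ x) 2
  set F : Plane → ℝ := fun x => d x ^ 2 - c * (Q₀ x ^ 2 * d x ^ 2) + gradNormSq d x with hF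
  have hFc : Continuous F := ((hdc.pow 2).sub (continuous_const.mul
    ((hQc.pow 2).mul (hdc.pow 2)))).add hgradc
  have hFi : Integrable F := (hdi.sub (hQ2d2.const_mul c)).add hdgi
  have hgi2 : ∀ i : Fin 2, Integrable (fun x => (fderiv ℝ d x (coordDir i)) ^ 2) := by
    intro i
    apply hdgi.mono' (((hgc i).pow 2).aestronglyMeasurable)
    filter_upwards with x
    rw [Real.norm_eq_abs, abs_of_nonneg (sq_nonneg _), gradNormSq_eq]
    exact Finset.single_le_sum (f := fun j => (fderiv ℝ d x (coordDir j)) ^ 2)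
      (fun j _ => sq_nonneg _) (Finset.mem_univ i)
  have hprod : ∀ i : Fin 2, Integrable (fun x => |d x| * |fderiv ℝ d x (coordDir i)|) := by
    intro i
    have hsum : Integrable (fun x => (d x ^ 2 + (fderiv ℝ d x (coordDir i)) ^ 2) / 2) :=
      (hdi.add (hgi2 i)).div_const 2
    apply hsum.mono' ((hdc.abs.mul (hgc i).abs).aestronglyMeasurable)
    filter_upwards with x
    simp only [Pi.mul_apply]
    rw [Real.norm_eq_abs, abs_of_nonneg (by positivity)]
    have h1 : |d x| ^ 2 = d x ^ 2 := sq_abs _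
    have h2 : |fderiv ℝ d x (coordDir i)| ^ 2 = (fderiv ℝ d x (coordDir i)) ^ 2 := sq_abs _
    nlinarith [sq_nonneg (|d x| - |fderiv ℝ d x (coordDir i)|)]
  set C0 : ℝ := ∫ x, (|d x| * |fderiv ℝ d x (coordDir 0)| + |d x| * |fderiv ℝ d x (coordDir 1)|)
    with hC0
  have hIn : ∀ n : ℕ, ∫ x, χ n x * F x
      = - ∫ x, d x * ∑ i : Fin 2, fderiv ℝ (χ n) x (coordDir i) * fderiv ℝ d x (coordDir i) := by
    intro n
    rw [← cutoff_ibp d hd (χ n) (hC2 n) (hCS n)]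
    apply integral_congr_ae
    filter_upwards with x
    have hl : lap d x = d x - c * Q₀ x ^ 2 * d x := by linarith [hpde x]
    rw [hF]
    simp only [hl]
    ring
  -- the bound
  have hbound : ∀ n : ℕ, |∫ x, χ n x * F x| ≤ ((n : ℝ) + 1)⁻¹ * M * C0 := by
    intro n
    have hK : (0 : ℝ) ≤ ((n : ℝ) + 1)⁻¹ * M := by positivity
    have hDScont : Continuous (fun x => d x * ∑ i : Fin 2,
        fderiv ℝ (χ n) x (coordDir i) * fderiv ℝ d x (coordDir i)) := by
      apply hdc.mul
      exact continuous_finset_sum _ (fun i _ => (contDeriv (χ n) (hC2 n) (coordDir i)).mul (hgc i))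
    have hsum_supp : HasCompactSupport (fun x =>
        fderiv ℝ (χ n) x (coordDir 0) * fderiv ℝ d x (coordDir 0)
        + fderiv ℝ (χ n) x (coordDir 1) * fderiv ℝ d x (coordDir 1)) :=
      HasCompactSupport.add (((hCS n).fderiv_apply ℝ (coordDir 0)).mul_right)
        (((hCS n).fderiv_apply ℝ (coordDir 1)).mul_right)
    have hDSsupp : HasCompactSupport (fun x => d x * ∑ i : Fin 2,
        fderiv ℝ (χ n) x (coordDir i) * fderiv ℝ d x (coordDir i)) := by
      have heq2 : (fun x => d x * ∑ i : Fin 2,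
          fderiv ℝ (χ n) x (coordDir i) * fderiv ℝ d x (coordDir i))
          = fun x => d x * (fderiv ℝ (χ n) x (coordDir 0) * fderiv ℝ d x (coordDir 0)
            + fderiv ℝ (χ n) x (coordDir 1) * fderiv ℝ d x (coordDir 1)) := by
        funext x; rw [Fin.sum_univ_two]
      rw [heq2]
      exact hsum_supp.mul_left
    have hDSint : Integrable (fun x => d x * ∑ i : Fin 2,
        fderiv ℝ (χ n) x (coordDir i) * fderiv ℝ d x (coordDir i)) :=
      hDScont.integrable_of_hasCompactSupport hDSsupp
    have hptwise : ∀ x, |d x * ∑ i : Fin 2,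
        fderiv ℝ (χ n) x (coordDir i) * fderiv ℝ d x (coordDir i)|
        ≤ (((n : ℝ) + 1)⁻¹ * M) * (|d x| * |fderiv ℝ d x (coordDir 0)|
            + |d x| * |fderiv ℝ d x (coordDir 1)|) := by
      intro x
      have hc0 : |fderiv ℝ (χ n) x (coordDir 0)| ≤ ((n : ℝ) + 1)⁻¹ * M := by
        have := hder n x (coordDir 0); rwa [norm_coordDir, mul_one] at this
      have hc1 : |fderiv ℝ (χ n) x (coordDir 1)| ≤ ((n : ℝ) + 1)⁻¹ * M := by
        have := hder n x (coordDir 1); rwa [norm_coordDir, mul_one] at this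
      rw [Fin.sum_univ_two, abs_mul]
      have habs : |fderiv ℝ (χ n) x (coordDir 0) * fderiv ℝ d x (coordDir 0)
          + fderiv ℝ (χ n) x (coordDir 1) * fderiv ℝ d x (coordDir 1)|
          ≤ |fderiv ℝ (χ n) x (coordDir 0)| * |fderiv ℝ d x (coordDir 0)|
            + |fderiv ℝ (χ n) x (coordDir 1)| * |fderiv ℝ d x (coordDir 1)| := by
        calc _ ≤ |fderiv ℝ (χ n) x (coordDir 0) * fderiv ℝ d x (coordDir 0)|
            + |fderiv ℝ (χ n) x (coordDir 1) * fderiv ℝ d x (coordDir 1)| := abs_add_le _ _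
        _ = _ := by rw [abs_mul, abs_mul]
      have t0 : 0 ≤ |d x| * |fderiv ℝ d x (coordDir 0)|
          * (((n : ℝ) + 1)⁻¹ * M - |fderiv ℝ (χ n) x (coordDir 0)|) :=
        mul_nonneg (mul_nonneg (abs_nonneg _) (abs_nonneg _)) (sub_nonneg.mpr hc0)
      have t1 : 0 ≤ |d x| * |fderiv ℝ d x (coordDir 1)|
          * (((n : ℝ) + 1)⁻¹ * M - |fderiv ℝ (χ n) x (coordDir 1)|) :=
        mul_nonneg (mul_nonneg (abs_nonneg _) (abs_nonneg _)) (sub_nonneg.mpr hc1)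
      have t2 := mul_le_mul_of_nonneg_left habs (abs_nonneg (d x))
      nlinarith [t0, t1, t2]
    calc |∫ x, χ n x * F x| = |∫ x, d x * ∑ i : Fin 2,
        fderiv ℝ (χ n) x (coordDir i) * fderiv ℝ d x (coordDir i)| := by
          rw [hIn n, abs_neg]
    _ ≤ ∫ x, |d x * ∑ i : Fin 2,
        fderiv ℝ (χ n) x (coordDir i) * fderiv ℝ d x (coordDir i)| := by
          have h := norm_integral_le_integral_norm (μ := (volume : Measure Plane))
            (fun x => d x * ∑ i : Fin 2,
              fderiv ℝ (χ n) x (coordDir i) * fderiv ℝ d x (coordDir i))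
          simp only [Real.norm_eq_abs] at h
          exact h
    _ ≤ ∫ x, (((n : ℝ) + 1)⁻¹ * M) * (|d x| * |fderiv ℝ d x (coordDir 0)|
            + |d x| * |fderiv ℝ d x (coordDir 1)|) := by
          apply integral_mono hDSint.abs (((hprod 0).add (hprod 1)).const_mul _)
          exact hptwise
    _ = ((n : ℝ) + 1)⁻¹ * M * C0 := by rw [integral_const_mul, hC0]
  -- limits
  have hlim1 : Tendsto (fun n : ℕ => ∫ x, χ n x * F x) atTop (𝓝 (∫ x, F x)) := by
    apply tendsto_integral_of_dominated_convergence (fun x => |F x|)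
      (fun n => ((hC2 n).continuous.mul hFc).aestronglyMeasurable) hFi.abs
    · intro n
      filter_upwards with x
      rw [Real.norm_eq_abs, Pi.mul_apply, abs_mul]
      calc |χ n x| * |F x| ≤ 1 * |F x| := by
            apply mul_le_mul_of_nonneg_right _ (abs_nonneg _)
            rw [abs_of_nonneg (hge0 n x)]; exact hle1 n x
      _ = |F x| := one_mul _
    · filter_upwards with x
      apply Tendsto.congr' _ tendsto_const_nhds
      filter_upwards [eventually_ge_atTop ⌈‖x‖⌉₊] with n hn
      have : ‖x‖ ≤ (n : ℝ) + 1 := by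
        calc ‖x‖ ≤ (⌈‖x‖⌉₊ : ℝ) := Nat.le_ceil _
        _ ≤ (n : ℝ) := by exact_mod_cast hn
        _ ≤ (n : ℝ) + 1 := by linarith
      rw [Pi.mul_apply, hone n x this, one_mul]
  have hlim2 : Tendsto (fun n : ℕ => ∫ x, χ n x * F x) atTop (𝓝 0) := by
    have h1 : Tendsto (fun n : ℕ => 1 / ((n : ℝ) + 1)) atTop (𝓝 0) :=
      tendsto_one_div_add_atTop_nhds_zero_nat
    have hb : Tendsto (fun n : ℕ => ((n : ℝ) + 1)⁻¹ * M * C0) atTop (𝓝 0) := by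
      have h2 := h1.mul_const (M * C0)
      rw [zero_mul] at h2
      apply h2.congr
      intro n; rw [one_div]; ring
    exact squeeze_zero_norm (fun n => by rw [Real.norm_eq_abs]; exact hbound n) hb
  have hFzero : ∫ x, F x = 0 := tendsto_nhds_unique hlim1 hlim2
  -- conclude using hLminus
  have hIsH1 : IsH1 d := ⟨hd.of_le one_le_two,
    by simpa [Real.norm_eq_abs, sq_abs] using hdi, hdgi⟩
  have hGnn := hLminus d hIsH1
  have hGi : Integrable (fun x => gradNormSq d x + d x ^ 2 - Q₀ x ^ 2 * d x ^ 2) :=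
    (hdgi.add hdi).sub hQ2d2
  have h1 : ∫ x, (1 - c) * (Q₀ x ^ 2 * d x ^ 2)
      = (∫ x, F x) - ∫ x, (gradNormSq d x + d x ^ 2 - Q₀ x ^ 2 * d x ^ 2) := by
    rw [← integral_sub hFi hGi]
    apply integral_congr_ae
    filter_upwards with x
    rw [hF]; ring
  have h2 : (1 - c) * ∫ x, Q₀ x ^ 2 * d x ^ 2 ≤ 0 := by
    rw [← integral_const_mul, h1, hFzero]
    linarith [hGnn]
  have h3 : 0 ≤ ∫ x, Q₀ x ^ 2 * d x ^ 2 := integral_nonneg (fun x => by positivity)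
  have h4 : ∫ x, Q₀ x ^ 2 * d x ^ 2 = 0 := by nlinarith [h2, h3]
  have hae : (fun x => Q₀ x ^ 2 * d x ^ 2) =ᵐ[volume] (fun _ => 0) :=
    (integral_eq_zero_iff_of_nonneg (fun x => by positivity) hQ2d2).mp h4
  have heq : (fun x => Q₀ x ^ 2 * d x ^ 2) = (fun _ => 0) :=
    (Continuous.ae_eq_iff_eq volume ((hQc.pow 2).mul (hdc.pow 2)) continuous_const).mp hae
  intro x
  have hx := congrFun heq x
  have hQx : Q₀ x ^ 2 ≠ 0 := pow_ne_zero 2 (ne_of_gt (hQpos x))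
  have : d x ^ 2 = 0 := by
    rcases mul_eq_zero.mp hx with h | h
    · exact absurd h hQx
    · exact h
  exact pow_eq_zero_iff two_ne_zero |>.mp this

lemma lap_sub (f g : Plane → ℝ) (hf : ContDiff ℝ 2 f) (hg : ContDiff ℝ 2 g) (x : Plane) :
    lap (fun y => f y - g y) x = lap f x - lap g x := by
  unfold lap
  rw [← Finset.sum_sub_distrib]
  apply Finset.sum_congr rfl
  intro i _
  have h1 : (fun y => fderiv ℝ (fun z => f z - g z) y (coordDir i))
      = fun y => fderiv ℝ f y (coordDir i) - fderiv ℝ g y (coordDir i) := by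
    funext y
    rw [fderiv_fun_sub (hf.differentiable two_ne_zero y) (hg.differentiable two_ne_zero y),
      ContinuousLinearMap.sub_apply]
  rw [h1, fderiv_fun_sub ((contDiffDeriv f hf (coordDir i)).differentiable one_ne_zero x)
    ((contDiffDeriv g hg (coordDir i)).differentiable one_ne_zero x),
    ContinuousLinearMap.sub_apply]


end AuxLemmas

/-- Null space of the linearized operator `L₊` for the `N`-coupled
system (Lemma 3.4). -/
theorem Lplus_kernel
    (Q₀ : SchwartzMap Plane ℝ)
    (hQpos : ∀ x, 0 < Q₀ x)
    (hQrad : ∀ x y : Plane, ‖x‖ = ‖y‖ → Q₀ x = Q₀ y)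
    (hQeq : ∀ x, lap (⇑Q₀) x - Q₀ x + Q₀ x ^ 3 = 0)
    (hker : ∀ r : Plane → ℝ, ContDiff ℝ 2 r → Integrable (fun x => r x ^ 2) →
      Integrable (fun x => gradNormSq r x) →
      (∀ x, lap r x - r x + 3 * Q₀ x ^ 2 * r x = 0) →
      ∃ c₁ c₂ : ℝ, r = fun x =>
        c₁ * fderiv ℝ (⇑Q₀) x (coordDir 0) + c₂ * fderiv ℝ (⇑Q₀) x (coordDir 1))
    (hLminus : ∀ h : Plane → ℝ, IsH1 h →
      0 ≤ ∫ x, (gradNormSq h x + h x ^ 2 - Q₀ x ^ 2 * h x ^ 2))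
    (N : ℕ) (hN : 2 ≤ N)
    (r : Fin N → Plane → ℝ)
    (hr2 : ∀ j, ContDiff ℝ 2 (r j))
    (hri : ∀ j, Integrable (fun x => r j x ^ 2))
    (hrgi : ∀ j, Integrable (fun x => gradNormSq (r j) x))
    (hsys : ∀ j x, lap (r j) x - r j x + (2 * (N : ℝ) + 1) * groundQ Q₀ N x ^ 2 * r j x
        + 4 * groundQ Q₀ N x ^ 2 * ∑ k ∈ Finset.univ.filter (fun k => k ≠ j), r k x = 0) :
    (∀ j k, r j = r k) ∧
      ∃ c₁ c₂ : ℝ, ∀ j, r j = fun x =>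
        c₁ * fderiv ℝ (⇑Q₀) x (coordDir 0) + c₂ * fderiv ℝ (⇑Q₀) x (coordDir 1) := by
  have hN2 : (2 : ℝ) ≤ (N : ℝ) := by exact_mod_cast hN
  have ht : (0 : ℝ) < 2 * (N : ℝ) - 1 := by linarith
  have hQ2 : ∀ x, groundQ Q₀ N x ^ 2 = (2 * (N : ℝ) - 1)⁻¹ * Q₀ x ^ 2 := by
    intro x
    unfold groundQ
    rw [mul_pow, inv_pow, Real.sq_sqrt ht.le]
  set c : ℝ := (2 * (N : ℝ) - 3) * (2 * (N : ℝ) - 1)⁻¹ with hcdef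
  have hc : c < 1 := by
    have h := (div_lt_one ht).mpr (by linarith : 2 * (N : ℝ) - 3 < 2 * (N : ℝ) - 1)
    rwa [div_eq_mul_inv] at h
  have hsum : ∀ (m : Fin N) (x : Plane),
      ∑ l ∈ Finset.univ.filter (fun l => l ≠ m), r l x = (∑ l, r l x) - r m x := by
    intro m x
    rw [Finset.filter_ne', Finset.sum_erase_eq_sub (Finset.mem_univ m)]
  have hreq : ∀ j k : Fin N, ∀ x, lap (fun y => r j y - r k y) x - (r j x - r k x)
      + c * Q₀ x ^ 2 * (r j x - r k x) = 0 := by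
    intro j k x
    have hj := hsys j x
    have hk := hsys k x
    rw [hsum j x, hQ2 x] at hj
    rw [hsum k x, hQ2 x] at hk
    rw [lap_sub _ _ (hr2 j) (hr2 k) x, hcdef]
    linear_combination hj - hk
  have hfd : ∀ (j k : Fin N) (i : Fin 2) (x : Plane),
      fderiv ℝ (fun y => r j y - r k y) x (coordDir i)
        = fderiv ℝ (r j) x (coordDir i) - fderiv ℝ (r k) x (coordDir i) := by
    intro j k i x
    rw [fderiv_fun_sub ((hr2 j).differentiable two_ne_zero x)
      ((hr2 k).differentiable two_ne_zero x), ContinuousLinearMap.sub_apply]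
  have hdzero : ∀ j k : Fin N, ∀ x, r j x - r k x = 0 := by
    intro j k
    have hd2 : ContDiff ℝ 2 (fun y => r j y - r k y) := (hr2 j).sub (hr2 k)
    apply key_vanish Q₀ hQpos hLminus hc (fun y => r j y - r k y) hd2 ?_ ?_ (hreq j k)
    · have hb : Integrable (fun x => 2 * (r j x ^ 2 + r k x ^ 2)) :=
        ((hri j).add (hri k)).const_mul 2
      apply hb.mono' ((((hr2 j).continuous.sub (hr2 k).continuous).pow 2).aestronglyMeasurable)
      filter_upwards with x
      rw [Real.norm_eq_abs, abs_of_nonneg (sq_nonneg _)]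
      simp only [Pi.pow_apply, Pi.sub_apply]
      nlinarith [sq_nonneg (r j x + r k x)]
    · have hb : Integrable (fun x => 2 * (gradNormSq (r j) x + gradNormSq (r k) x)) :=
        ((hrgi j).add (hrgi k)).const_mul 2
      apply hb.mono'
      · exact (continuous_finset_sum _ (fun i _ =>
          ((contDeriv _ hd2 (coordDir i)).norm.pow 2))).aestronglyMeasurable
      · filter_upwards with x
        have hnn : 0 ≤ gradNormSq (fun y => r j y - r k y) x := by
          apply Finset.sum_nonneg
          intro i _
          positivity
        rw [Real.norm_eq_abs, abs_of_nonneg hnn, gradNormSq_eq, gradNormSq_eq, gradNormSq_eq,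
          Fin.sum_univ_two, Fin.sum_univ_two, Fin.sum_univ_two, hfd j k 0 x, hfd j k 1 x]
        nlinarith [sq_nonneg (fderiv ℝ (r j) x (coordDir 0) + fderiv ℝ (r k) x (coordDir 0)),
          sq_nonneg (fderiv ℝ (r j) x (coordDir 1) + fderiv ℝ (r k) x (coordDir 1))]
  have hconc1 : ∀ j k : Fin N, r j = r k := by
    intro j k
    funext x
    have := hdzero j k x
    linarith
  have hN0 : 0 < N := by omega
  set j₀ : Fin N := ⟨0, hN0⟩ with hj₀
  have hcard : (Finset.univ.filter (fun l : Fin N => l ≠ j₀)).card = N - 1 := by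
    rw [Finset.filter_ne', Finset.card_erase_of_mem (Finset.mem_univ _), Finset.card_univ,
      Fintype.card_fin]
  have hrsum : ∀ x, ∑ l ∈ Finset.univ.filter (fun l : Fin N => l ≠ j₀), r l x
      = ((N : ℝ) - 1) * r j₀ x := by
    intro x
    rw [Finset.sum_congr rfl (fun l _ => by rw [hconc1 l j₀]), Finset.sum_const, hcard,
      nsmul_eq_mul]
    congr 1
    rw [Nat.cast_sub hN0]
    push_cast
    ring
  have hpde0 : ∀ x, lap (r j₀) x - r j₀ x + 3 * Q₀ x ^ 2 * r j₀ x = 0 := by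
    intro x
    have h := hsys j₀ x
    rw [hrsum x, hQ2 x] at h
    have htu : (2 * (N : ℝ) - 1) * (2 * (N : ℝ) - 1)⁻¹ = 1 := mul_inv_cancel₀ (ne_of_gt ht)
    linear_combination h - 3 * Q₀ x ^ 2 * r j₀ x * htu
  obtain ⟨c₁, c₂, hc12⟩ := hker (r j₀) (hr2 j₀) (hri j₀) (hrgi j₀) hpde0
  exact ⟨hconc1, c₁, c₂, fun j => (hconc1 j j₀).trans hc12⟩
end
end

section
/- Vanishing of correlations under extreme rescaling (claims (2.10)–(2.11) in the proof of Lemma 2.1): let u, Q ∈ L²(ℝ²,ℂ). Then sup_{x̃,ξ∈ℝ²} | ∫_{ℝ²} u(x) e^{ix·ξ} λ^{−1} conj(Q(λ^{−1}x + x̃)) dx | → 0 as λ → ∞, and the same supremum tends to 0 as λ → 0⁺. -/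
open MeasureTheory Filter

noncomputable section

lemma continuous_mexp : Continuous mexp := by unfold mexp; fun_prop

lemma norm_mexp (t : ℝ) : ‖mexp t‖ = 1 := by
  unfold mexp
  rw [Complex.norm_exp]
  simp

lemma measurable_T (lam : ℝ) (xt : Plane) :
    Measurable (fun x : Plane => lam⁻¹ • x + xt) :=
  (measurable_id.const_smul lam⁻¹).add_const xt

lemma map_T {lam : ℝ} (hlam : lam ≠ 0) (xt : Plane) :
    volume.map (fun x : Plane => lam⁻¹ • x + xt) = ENNReal.ofReal (lam ^ 2) • volume := by
  have h1 : (lam⁻¹ : ℝ) ≠ 0 := inv_ne_zero hlam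
  have heq : (fun x : Plane => lam⁻¹ • x + xt)
      = (fun y : Plane => y + xt) ∘ (fun x : Plane => lam⁻¹ • x) := rfl
  rw [heq, ← Measure.map_map (measurable_add_const xt) (measurable_const_smul _),
    Measure.map_addHaar_smul volume h1, Measure.map_smul, map_add_right_eq_self]
  congr 1
  rw [finrank_euclideanSpace_fin, inv_pow, inv_inv, abs_of_nonneg (sq_nonneg lam)]

lemma qmp_T {lam : ℝ} (hlam : lam ≠ 0) (xt : Plane) :
    Measure.QuasiMeasurePreserving (fun x : Plane => lam⁻¹ • x + xt) volume volume :=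
  ⟨measurable_T lam xt, by rw [map_T hlam xt]; exact Measure.smul_absolutelyContinuous⟩

lemma memLp_comp {lam : ℝ} (hlam : lam ≠ 0) {b : Plane → ℂ} (hb : MemLp b 2 volume)
    (xt : Plane) : MemLp (fun x : Plane => b (lam⁻¹ • x + xt)) 2 volume := by
  have hmap := map_T hlam xt
  have hb' : AEStronglyMeasurable b (volume.map (fun x : Plane => lam⁻¹ • x + xt)) := by
    rw [hmap]; exact hb.1.mono_ac Measure.smul_absolutelyContinuous
  refine ⟨hb.1.comp_quasiMeasurePreserving (qmp_T hlam xt), ?_⟩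
  have h2 : eLpNorm (b ∘ fun x : Plane => lam⁻¹ • x + xt) 2 volume
      = eLpNorm b 2 (volume.map (fun x : Plane => lam⁻¹ • x + xt)) :=
    (eLpNorm_map_measure hb' (measurable_T lam xt).aemeasurable).symm
  have h3 : (fun x : Plane => b (lam⁻¹ • x + xt))
      = b ∘ (fun x : Plane => lam⁻¹ • x + xt) := rfl
  rw [h3, h2, hmap, eLpNorm_smul_measure_of_ne_top (by norm_num) b _]
  exact ENNReal.mul_lt_top
    (ENNReal.rpow_lt_top_of_nonneg (by norm_num) ENNReal.ofReal_ne_top) hb.2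

def Nsq (f : Plane → ℂ) : ℝ := (∫ x : Plane, ‖f x‖ ^ 2) ^ (1/2 : ℝ)

lemma Nsq_nonneg (f : Plane → ℂ) : 0 ≤ Nsq f :=
  Real.rpow_nonneg (integral_nonneg fun x => by positivity) _

lemma nsq_eq {f : Plane → ℂ} (hf : MemLp f 2 volume) :
    Nsq f = (eLpNorm f 2 volume).toReal := by
  rw [hf.eLpNorm_eq_integral_rpow_norm two_ne_zero ENNReal.ofNat_ne_top,
    ENNReal.toReal_ofReal (by positivity)]
  have : ((2 : ENNReal)).toReal = (2:ℝ) := by norm_num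
  rw [Nsq, this]
  norm_num


lemma sq_int_comp {lam : ℝ} (hlam : 0 < lam) (b : Plane → ℂ) (xt : Plane) :
    ∫ x : Plane, (lam⁻¹ * ‖b (lam⁻¹ • x + xt)‖) ^ (2:ℕ)
      = ∫ x : Plane, ‖b x‖ ^ (2:ℕ) := by
  have A := Measure.integral_comp_inv_smul_of_nonneg (μ := volume)
    (fun y : Plane => ‖b (y + xt)‖ ^ (2:ℕ)) hlam.le
  have B := integral_add_right_eq_self (μ := volume) (fun y : Plane => ‖b y‖ ^ (2:ℕ)) xt
  simp only [finrank_euclideanSpace_fin, smul_eq_mul] at A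
  simp_rw [mul_pow]
  rw [integral_const_mul, A, B, ← mul_assoc]
  have : lam⁻¹ ^ 2 * lam ^ 2 = 1 := by field_simp
  rw [this, one_mul]

lemma corr_le_nsq {lam : ℝ} (hlam : 0 < lam) {a b : Plane → ℂ}
    (ha : MemLp a 2 volume) (hb : MemLp b 2 volume) (xt xi : Plane) :
    ‖∫ x : Plane, a x * mexp (inner ℝ x xi) * ((lam⁻¹ : ℝ) : ℂ) *
        (starRingEnd ℂ) (b (lam⁻¹ • x + xt))‖ ≤ Nsq a * Nsq b := by
  have hlam' : lam ≠ 0 := ne_of_gt hlam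
  have hbT : MemLp (fun x : Plane => b (lam⁻¹ • x + xt)) 2 volume := memLp_comp hlam' hb xt
  have hnorm : ∀ x : Plane,
      ‖a x * mexp (inner ℝ x xi) * ((lam⁻¹ : ℝ) : ℂ) * (starRingEnd ℂ) (b (lam⁻¹ • x + xt))‖
        = ‖a x‖ * (lam⁻¹ * ‖b (lam⁻¹ • x + xt)‖) := by
    intro x
    rw [norm_mul, norm_mul, norm_mul, norm_mexp, RingHomIsometric.norm_map]
    rw [Complex.norm_real, Real.norm_eq_abs, abs_of_nonneg (inv_nonneg.2 hlam.le)]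
    ring
  calc ‖∫ x : Plane, a x * mexp (inner ℝ x xi) * ((lam⁻¹ : ℝ) : ℂ) *
        (starRingEnd ℂ) (b (lam⁻¹ • x + xt))‖
      ≤ ∫ x : Plane, ‖a x * mexp (inner ℝ x xi) * ((lam⁻¹ : ℝ) : ℂ) *
        (starRingEnd ℂ) (b (lam⁻¹ • x + xt))‖ := norm_integral_le_integral_norm _
    _ = ∫ x : Plane, ‖a x‖ * (lam⁻¹ * ‖b (lam⁻¹ • x + xt)‖) := by simp_rw [hnorm]
    _ ≤ (∫ x : Plane, ‖a x‖ ^ (2:ℝ)) ^ (1/2:ℝ)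
        * (∫ x : Plane, (lam⁻¹ * ‖b (lam⁻¹ • x + xt)‖) ^ (2:ℝ)) ^ (1/2:ℝ) := by
      refine integral_mul_le_Lp_mul_Lq_of_nonneg Real.HolderConjugate.two_two
        (Eventually.of_forall fun x => norm_nonneg _)
        (Eventually.of_forall fun x => by positivity) ?_ ?_
      · have : ENNReal.ofReal (2:ℝ) = 2 := by norm_num
        rw [this]; exact ha.norm
      · have : ENNReal.ofReal (2:ℝ) = 2 := by norm_num
        rw [this]
        exact hbT.norm.const_mul lam⁻¹
    _ = Nsq a * Nsq b := by
      have e1 : ∀ y : ℝ, 0 ≤ y → y ^ (2:ℝ) = y ^ (2:ℕ) := fun y hy => by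
        rw [← Real.rpow_natCast y 2]; norm_num
      rw [Nsq, Nsq]
      congr 1
      · congr 1; exact integral_congr_ae (Eventually.of_forall fun x => e1 _ (norm_nonneg _))
      · congr 1
        rw [integral_congr_ae (Eventually.of_forall fun x => e1 _ (by positivity))]
        exact sq_int_comp hlam b xt

lemma integrand_int {lam : ℝ} (hlam : lam ≠ 0) {a b : Plane → ℂ}
    (ha : MemLp a 2 volume) (hb : MemLp b 2 volume) (xt xi : Plane) :
    Integrable (fun x : Plane => a x * mexp (inner ℝ x xi) * ((lam⁻¹ : ℝ) : ℂ) *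
        (starRingEnd ℂ) (b (lam⁻¹ • x + xt))) volume := by
  have hbT := memLp_comp hlam hb xt
  have hc : Continuous fun x : Plane => mexp (inner ℝ x xi) :=
    continuous_mexp.comp (continuous_id.inner continuous_const)
  have hφ : MemLp (fun x : Plane => a x * mexp (inner ℝ x xi) * ((lam⁻¹ : ℝ) : ℂ)) 2 volume := by
    refine MemLp.of_le_mul (c := ‖((lam⁻¹ : ℝ) : ℂ)‖) ha
      ((ha.1.mul hc.aestronglyMeasurable).mul_const _)
      (Eventually.of_forall fun x => ?_)
    rw [norm_mul, norm_mul, norm_mexp, mul_one, mul_comm]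
  have hconj : MemLp (fun x : Plane => (starRingEnd ℂ) (b (lam⁻¹ • x + xt))) 2 volume := by
    refine MemLp.of_le_mul (c := 1) hbT
      (continuous_star.comp_aestronglyMeasurable hbT.1) (Eventually.of_forall fun x => ?_)
    rw [RingHomIsometric.norm_map, one_mul]
  have hpq : (1 : ENNReal)/1 = 1/2 + 1/2 := by simp [ENNReal.div_eq_inv_mul, ENNReal.inv_two_add_inv_two]
  have H := memLp_one_iff_integrable.mp (hconj.smul (r := 1) hφ)
  exact H

lemma corr_le_support {lam : ℝ} (hlam : 0 < lam) {a b : Plane → ℂ} {Ca Cb R : ℝ}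
    (hCa : ∀ x, ‖a x‖ ≤ Ca) (hCb : ∀ x, ‖b x‖ ≤ Cb)
    (hsa : ∀ x, x ∉ Metric.closedBall (0 : Plane) R → a x = 0)
    (hsb : ∀ x, x ∉ Metric.closedBall (0 : Plane) R → b x = 0)
    (xt xi : Plane) :
    ‖∫ x : Plane, a x * mexp (inner ℝ x xi) * ((lam⁻¹ : ℝ) : ℂ) *
        (starRingEnd ℂ) (b (lam⁻¹ • x + xt))‖
      ≤ Ca * Cb * (volume (Metric.closedBall (0 : Plane) R)).toReal * min lam lam⁻¹ := by
  have hlam' : lam ≠ 0 := ne_of_gt hlam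
  have hCa0 : 0 ≤ Ca := le_trans (norm_nonneg _) (hCa 0)
  have hCb0 : 0 ≤ Cb := le_trans (norm_nonneg _) (hCb 0)
  set B := Metric.closedBall (0 : Plane) R with hB
  set S := B ∩ (fun x : Plane => lam⁻¹ • x + xt) ⁻¹' B with hSdef
  have hSmeas : MeasurableSet S :=
    measurableSet_closedBall.inter ((measurable_T lam xt) measurableSet_closedBall)
  have hnorm : ∀ x : Plane,
      ‖a x * mexp (inner ℝ x xi) * ((lam⁻¹ : ℝ) : ℂ) * (starRingEnd ℂ) (b (lam⁻¹ • x + xt))‖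
        = ‖a x‖ * (lam⁻¹ * ‖b (lam⁻¹ • x + xt)‖) := by
    intro x
    rw [norm_mul, norm_mul, norm_mul, norm_mexp, RingHomIsometric.norm_map]
    rw [Complex.norm_real, Real.norm_eq_abs, abs_of_nonneg (inv_nonneg.2 hlam.le)]
    ring
  have hBfin : volume B < ⊤ := measure_closedBall_lt_top
  -- pointwise bound
  have hpt : ∀ x : Plane,
      ‖a x * mexp (inner ℝ x xi) * ((lam⁻¹ : ℝ) : ℂ) * (starRingEnd ℂ) (b (lam⁻¹ • x + xt))‖
        ≤ S.indicator (fun _ => Ca * (lam⁻¹ * Cb)) x := by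
    intro x
    by_cases hx : x ∈ S
    · rw [Set.indicator_of_mem hx, hnorm]
      have h1 : ‖a x‖ ≤ Ca := hCa x
      have h2 : ‖b (lam⁻¹ • x + xt)‖ ≤ Cb := hCb _
      have hl : (0:ℝ) ≤ lam⁻¹ := inv_nonneg.2 hlam.le
      gcongr
    · rw [Set.indicator_of_notMem hx]
      rcases not_and_or.mp (by simpa [hSdef, Set.mem_inter_iff] using hx) with h | h
      · rw [hsa x h]; simp
      · rw [hsb _ h]; simp
  -- integrate
  have hind : Integrable (S.indicator fun _ => Ca * (lam⁻¹ * Cb)) volume := by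
    rw [integrable_indicator_iff hSmeas]
    refine (integrableOn_const_iff (by finiteness)).2 (Or.inr ?_)
    exact lt_of_le_of_lt (measure_mono Set.inter_subset_left) hBfin
  have hstep1 : ‖∫ x : Plane, a x * mexp (inner ℝ x xi) * ((lam⁻¹ : ℝ) : ℂ) *
        (starRingEnd ℂ) (b (lam⁻¹ • x + xt))‖
      ≤ (volume S).toReal * (Ca * (lam⁻¹ * Cb)) := by
    calc ‖∫ x : Plane, a x * mexp (inner ℝ x xi) * ((lam⁻¹ : ℝ) : ℂ) *
          (starRingEnd ℂ) (b (lam⁻¹ • x + xt))‖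
        ≤ ∫ x : Plane, ‖a x * mexp (inner ℝ x xi) * ((lam⁻¹ : ℝ) : ℂ) *
          (starRingEnd ℂ) (b (lam⁻¹ • x + xt))‖ := norm_integral_le_integral_norm _
      _ ≤ ∫ x : Plane, S.indicator (fun _ => Ca * (lam⁻¹ * Cb)) x :=
        integral_mono_of_nonneg (Eventually.of_forall fun x => norm_nonneg _) hind
          (Eventually.of_forall hpt)
      _ = (volume S).toReal * (Ca * (lam⁻¹ * Cb)) := by
        rw [integral_indicator_const _ hSmeas]; simp [smul_eq_mul, Measure.real]
  -- measure bounds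
  have hS1 : volume S ≤ volume B := measure_mono Set.inter_subset_left
  have hS2 : volume S ≤ ENNReal.ofReal (lam ^ 2) * volume B := by
    refine le_trans (measure_mono Set.inter_subset_right) ?_
    rw [← Measure.map_apply (measurable_T lam xt) measurableSet_closedBall, map_T hlam' xt]
    simp only [Measure.smul_apply, smul_eq_mul]; exact le_rfl
  set V := (volume B).toReal with hV
  have hV0 : 0 ≤ V := ENNReal.toReal_nonneg
  rcases le_total lam lam⁻¹ with hml | hml
  · -- min = lam, use hS2
    rw [min_eq_left hml]
    have hSr : (volume S).toReal ≤ lam ^ 2 * V := by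
      have : (ENNReal.ofReal (lam ^ 2) * volume B).toReal = lam ^ 2 * V := by
        rw [ENNReal.toReal_mul, ENNReal.toReal_ofReal (sq_nonneg lam)]
      rw [← this]
      exact ENNReal.toReal_mono (by finiteness) hS2
    calc ‖∫ x : Plane, a x * mexp (inner ℝ x xi) * ((lam⁻¹ : ℝ) : ℂ) *
          (starRingEnd ℂ) (b (lam⁻¹ • x + xt))‖
        ≤ (volume S).toReal * (Ca * (lam⁻¹ * Cb)) := hstep1
      _ ≤ (lam ^ 2 * V) * (Ca * (lam⁻¹ * Cb)) := by
        refine mul_le_mul_of_nonneg_right hSr (by positivity)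
      _ = Ca * Cb * V * lam := by field_simp
  · rw [min_eq_right hml]
    have hSr : (volume S).toReal ≤ V := ENNReal.toReal_mono (by finiteness) hS1
    calc ‖∫ x : Plane, a x * mexp (inner ℝ x xi) * ((lam⁻¹ : ℝ) : ℂ) *
          (starRingEnd ℂ) (b (lam⁻¹ • x + xt))‖
        ≤ (volume S).toReal * (Ca * (lam⁻¹ * Cb)) := hstep1
      _ ≤ V * (Ca * (lam⁻¹ * Cb)) := mul_le_mul_of_nonneg_right hSr (by positivity)
      _ = Ca * Cb * V * lam⁻¹ := by ring

lemma div_bound {ε n : ℝ} (hε : 0 < ε) (hn : 0 ≤ n) : ε / (3 * (n + 1)) * n ≤ ε / 3 := by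
  rw [div_mul_eq_mul_div, div_le_div_iff₀ (by positivity) (by norm_num)]
  nlinarith

lemma key (u Q : Plane → ℂ) (hu : MemLp u 2 volume) (hQ : MemLp Q 2 volume)
    {ε : ℝ} (hε : 0 < ε) :
    ∃ C : ℝ, 0 ≤ C ∧ ∀ lam : ℝ, 0 < lam → ∀ xt xi : Plane,
      ‖∫ x : Plane, u x * mexp (inner ℝ x xi) * ((lam⁻¹ : ℝ) : ℂ) *
          (starRingEnd ℂ) (Q (lam⁻¹ • x + xt))‖ ≤ ε + C * min lam lam⁻¹ := by
  -- approximate u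
  set d₁ : ℝ := ε / (3 * (Nsq Q + 1)) with hd₁
  have hd₁0 : 0 < d₁ := by
    have := Nsq_nonneg Q; positivity
  obtain ⟨u', hu'supp, hu'close, hu'cont, hu'mem⟩ :=
    hu.exists_hasCompactSupport_eLpNorm_sub_le ENNReal.ofNat_ne_top
      (ε := ENNReal.ofReal d₁) (ENNReal.ofReal_pos.2 hd₁0).ne'
  -- approximate Q
  set d₂ : ℝ := ε / (3 * (Nsq u' + 1)) with hd₂
  have hd₂0 : 0 < d₂ := by
    have := Nsq_nonneg u'; positivity
  obtain ⟨Q', hQ'supp, hQ'close, hQ'cont, hQ'mem⟩ :=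
    hQ.exists_hasCompactSupport_eLpNorm_sub_le ENNReal.ofNat_ne_top
      (ε := ENNReal.ofReal d₂) (ENNReal.ofReal_pos.2 hd₂0).ne'
  -- nsq bounds
  have hN1 : Nsq (u - u') ≤ d₁ := by
    rw [nsq_eq (hu.sub hu'mem)]
    exact ENNReal.toReal_le_of_le_ofReal hd₁0.le hu'close
  have hN2 : Nsq (Q - Q') ≤ d₂ := by
    rw [nsq_eq (hQ.sub hQ'mem)]
    exact ENNReal.toReal_le_of_le_ofReal hd₂0.le hQ'close
  -- bounds and supports
  obtain ⟨C₁, hC₁⟩ := hu'supp.exists_bound_of_continuous hu'cont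
  obtain ⟨C₂, hC₂⟩ := hQ'supp.exists_bound_of_continuous hQ'cont
  obtain ⟨R₁, hR₁⟩ := hu'supp.isBounded.subset_closedBall (0 : Plane)
  obtain ⟨R₂, hR₂⟩ := hQ'supp.isBounded.subset_closedBall (0 : Plane)
  set R := max R₁ R₂ with hR
  have hsu' : ∀ x, x ∉ Metric.closedBall (0 : Plane) R → u' x = 0 := by
    intro x hx
    by_contra h
    exact hx (Metric.closedBall_subset_closedBall (le_max_left _ _)
      (hR₁ (subset_tsupport u' h)))
  have hsQ' : ∀ x, x ∉ Metric.closedBall (0 : Plane) R → Q' x = 0 := by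
    intro x hx
    by_contra h
    exact hx (Metric.closedBall_subset_closedBall (le_max_right _ _)
      (hR₂ (subset_tsupport Q' h)))
  set V := (volume (Metric.closedBall (0 : Plane) R)).toReal with hVdef
  have hC₁0 : 0 ≤ C₁ := le_trans (norm_nonneg _) (hC₁ 0)
  have hC₂0 : 0 ≤ C₂ := le_trans (norm_nonneg _) (hC₂ 0)
  refine ⟨C₁ * C₂ * V, by positivity, ?_⟩
  intro lam hlam xt xi
  have hlam' : lam ≠ 0 := ne_of_gt hlam
  -- pointwise splitting
  have hpt : ∀ x : Plane,
      u x * mexp (inner ℝ x xi) * ((lam⁻¹ : ℝ) : ℂ) * (starRingEnd ℂ) (Q (lam⁻¹ • x + xt))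
      = ((u - u') x * mexp (inner ℝ x xi) * ((lam⁻¹ : ℝ) : ℂ) *
          (starRingEnd ℂ) (Q (lam⁻¹ • x + xt)))
        + (u' x * mexp (inner ℝ x xi) * ((lam⁻¹ : ℝ) : ℂ) *
          (starRingEnd ℂ) ((Q - Q') (lam⁻¹ • x + xt)))
        + (u' x * mexp (inner ℝ x xi) * ((lam⁻¹ : ℝ) : ℂ) *
          (starRingEnd ℂ) (Q' (lam⁻¹ • x + xt))) := by
    intro x
    simp only [Pi.sub_apply, map_sub]
    ring
  have hint1 := integrand_int hlam' (hu.sub hu'mem) hQ xt xi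
  have hint2 := integrand_int hlam' hu'mem (hQ.sub hQ'mem) xt xi
  have hint3 := integrand_int hlam' hu'mem hQ'mem xt xi
  have hsplit : (∫ x : Plane, u x * mexp (inner ℝ x xi) * ((lam⁻¹ : ℝ) : ℂ) *
        (starRingEnd ℂ) (Q (lam⁻¹ • x + xt)))
      = (∫ x : Plane, (u - u') x * mexp (inner ℝ x xi) * ((lam⁻¹ : ℝ) : ℂ) *
          (starRingEnd ℂ) (Q (lam⁻¹ • x + xt)))
        + (∫ x : Plane, u' x * mexp (inner ℝ x xi) * ((lam⁻¹ : ℝ) : ℂ) *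
          (starRingEnd ℂ) ((Q - Q') (lam⁻¹ • x + xt)))
        + (∫ x : Plane, u' x * mexp (inner ℝ x xi) * ((lam⁻¹ : ℝ) : ℂ) *
          (starRingEnd ℂ) (Q' (lam⁻¹ • x + xt))) := by
    calc (∫ x : Plane, u x * mexp (inner ℝ x xi) * ((lam⁻¹ : ℝ) : ℂ) *
          (starRingEnd ℂ) (Q (lam⁻¹ • x + xt)))
        = ∫ x : Plane, ((u - u') x * mexp (inner ℝ x xi) * ((lam⁻¹ : ℝ) : ℂ) *
            (starRingEnd ℂ) (Q (lam⁻¹ • x + xt))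
          + u' x * mexp (inner ℝ x xi) * ((lam⁻¹ : ℝ) : ℂ) *
            (starRingEnd ℂ) ((Q - Q') (lam⁻¹ • x + xt)))
          + u' x * mexp (inner ℝ x xi) * ((lam⁻¹ : ℝ) : ℂ) *
            (starRingEnd ℂ) (Q' (lam⁻¹ • x + xt)) :=
        integral_congr_ae (Eventually.of_forall fun x => hpt x)
      _ = (∫ x : Plane, (u - u') x * mexp (inner ℝ x xi) * ((lam⁻¹ : ℝ) : ℂ) *
            (starRingEnd ℂ) (Q (lam⁻¹ • x + xt))
          + u' x * mexp (inner ℝ x xi) * ((lam⁻¹ : ℝ) : ℂ) *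
            (starRingEnd ℂ) ((Q - Q') (lam⁻¹ • x + xt)))
          + ∫ x : Plane, u' x * mexp (inner ℝ x xi) * ((lam⁻¹ : ℝ) : ℂ) *
            (starRingEnd ℂ) (Q' (lam⁻¹ • x + xt)) :=
        integral_add (hint1.add hint2) hint3
      _ = _ := by rw [integral_add hint1 hint2]
  have hb1 : ‖∫ x : Plane, (u - u') x * mexp (inner ℝ x xi) * ((lam⁻¹ : ℝ) : ℂ) *
        (starRingEnd ℂ) (Q (lam⁻¹ • x + xt))‖ ≤ ε / 3 := by
    refine le_trans (corr_le_nsq hlam (hu.sub hu'mem) hQ xt xi) ?_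
    calc Nsq (u - u') * Nsq Q ≤ d₁ * Nsq Q :=
          mul_le_mul_of_nonneg_right hN1 (Nsq_nonneg Q)
      _ ≤ ε / 3 := div_bound hε (Nsq_nonneg Q)
  have hb2 : ‖∫ x : Plane, u' x * mexp (inner ℝ x xi) * ((lam⁻¹ : ℝ) : ℂ) *
        (starRingEnd ℂ) ((Q - Q') (lam⁻¹ • x + xt))‖ ≤ ε / 3 := by
    refine le_trans (corr_le_nsq hlam hu'mem (hQ.sub hQ'mem) xt xi) ?_
    calc Nsq u' * Nsq (Q - Q') ≤ Nsq u' * d₂ :=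
          mul_le_mul_of_nonneg_left hN2 (Nsq_nonneg u')
      _ = d₂ * Nsq u' := mul_comm _ _
      _ ≤ ε / 3 := div_bound hε (Nsq_nonneg u')
  have hb3 := corr_le_support hlam hC₁ hC₂ hsu' hsQ' xt xi
  calc ‖∫ x : Plane, u x * mexp (inner ℝ x xi) * ((lam⁻¹ : ℝ) : ℂ) *
        (starRingEnd ℂ) (Q (lam⁻¹ • x + xt))‖
      ≤ ‖∫ x : Plane, (u - u') x * mexp (inner ℝ x xi) * ((lam⁻¹ : ℝ) : ℂ) *
          (starRingEnd ℂ) (Q (lam⁻¹ • x + xt))‖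
        + ‖∫ x : Plane, u' x * mexp (inner ℝ x xi) * ((lam⁻¹ : ℝ) : ℂ) *
          (starRingEnd ℂ) ((Q - Q') (lam⁻¹ • x + xt))‖
        + ‖∫ x : Plane, u' x * mexp (inner ℝ x xi) * ((lam⁻¹ : ℝ) : ℂ) *
          (starRingEnd ℂ) (Q' (lam⁻¹ • x + xt))‖ := by
        rw [hsplit]; exact norm_add₃_le
    _ ≤ ε / 3 + ε / 3 + C₁ * C₂ * V * min lam lam⁻¹ := by
        gcongr
    _ ≤ ε + C₁ * C₂ * V * min lam lam⁻¹ := by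
        have : ε / 3 + ε / 3 ≤ ε := by linarith
        linarith

/-- Vanishing of correlations under extreme rescaling
(claims (2.10)–(2.11) in the proof of Lemma 2.1). -/
theorem correlation_vanishing_extreme_scaling
    (u Q : Plane → ℂ) (hu : MemLp u 2 volume) (hQ : MemLp Q 2 volume) :
    Tendsto (fun lam : ℝ => ⨆ xt : Plane, ⨆ xi : Plane,
        ‖∫ x : Plane, u x * mexp (inner ℝ x xi) * ((lam⁻¹ : ℝ) : ℂ) *
            (starRingEnd ℂ) (Q (lam⁻¹ • x + xt))‖)
      atTop (nhds 0) ∧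
    Tendsto (fun lam : ℝ => ⨆ xt : Plane, ⨆ xi : Plane,
        ‖∫ x : Plane, u x * mexp (inner ℝ x xi) * ((lam⁻¹ : ℝ) : ℂ) *
            (starRingEnd ℂ) (Q (lam⁻¹ • x + xt))‖)
      (nhdsWithin 0 (Set.Ioi 0)) (nhds 0) := by
  set S : ℝ → ℝ := fun lam => ⨆ xt : Plane, ⨆ xi : Plane,
    ‖∫ x : Plane, u x * mexp (inner ℝ x xi) * ((lam⁻¹ : ℝ) : ℂ) *
        (starRingEnd ℂ) (Q (lam⁻¹ • x + xt))‖ with hSdef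
  have hS0 : ∀ lam, 0 ≤ S lam := fun lam =>
    Real.iSup_nonneg fun xt => Real.iSup_nonneg fun xi => norm_nonneg _
  have hSle : ∀ {ε C lam : ℝ}, 0 ≤ C → 0 < lam → 0 ≤ ε →
      (∀ xt xi : Plane, ‖∫ x : Plane, u x * mexp (inner ℝ x xi) * ((lam⁻¹ : ℝ) : ℂ) *
          (starRingEnd ℂ) (Q (lam⁻¹ • x + xt))‖ ≤ ε + C * min lam lam⁻¹) →
      S lam ≤ ε + C * min lam lam⁻¹ := by
    intro ε C lam hC hlam hε h
    have hR : 0 ≤ ε + C * min lam lam⁻¹ :=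
      add_nonneg hε (mul_nonneg hC (le_min hlam.le (inv_nonneg.2 hlam.le)))
    exact Real.iSup_le (fun xt => Real.iSup_le (fun xi => h xt xi) hR) hR
  constructor
  · rw [Metric.tendsto_nhds]
    intro δ hδ
    obtain ⟨C, hC0, hC⟩ := key u Q hu hQ (half_pos hδ)
    filter_upwards [eventually_ge_atTop (max 1 (2 * (C + 1) / δ))] with lam hlam
    have h1 : (1 : ℝ) ≤ lam := le_trans (le_max_left _ _) hlam
    have hlam0 : (0 : ℝ) < lam := lt_of_lt_of_le one_pos h1
    have hb := hSle hC0 hlam0 (half_pos hδ).le (hC lam hlam0)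
    rw [Real.dist_eq, sub_zero, abs_of_nonneg (hS0 lam)]
    have h2 : 2 * (C + 1) / δ ≤ lam := le_trans (le_max_right _ _) hlam
    have hpos : (0:ℝ) < 2 * (C + 1) / δ := by positivity
    have hinv : lam⁻¹ ≤ δ / (2 * (C + 1)) :=
      calc lam⁻¹ ≤ (2 * (C + 1) / δ)⁻¹ := inv_anti₀ hpos h2
        _ = δ / (2 * (C + 1)) := by rw [inv_div]
    have hfin : C * min lam lam⁻¹ < δ / 2 := by
      have hm : min lam lam⁻¹ ≤ lam⁻¹ := min_le_right _ _
      have : C * min lam lam⁻¹ ≤ C * (δ / (2 * (C + 1))) :=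
        mul_le_mul_of_nonneg_left (le_trans hm hinv) hC0
      have hlt : C * (δ / (2 * (C + 1))) < δ / 2 := by
        rw [mul_div_assoc', div_lt_div_iff₀ (by positivity) (by norm_num)]
        nlinarith
      linarith
    calc S lam ≤ δ / 2 + C * min lam lam⁻¹ := hb
      _ < δ := by linarith
  · rw [Metric.tendsto_nhds]
    intro δ hδ
    obtain ⟨C, hC0, hC⟩ := key u Q hu hQ (half_pos hδ)
    have hr : (0:ℝ) < δ / (2 * (C + 1)) := by positivity
    filter_upwards [Ioo_mem_nhdsGT_of_mem (Set.mem_Ico.2 ⟨le_refl (0:ℝ), hr⟩)] with lam hlam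
    have hlam0 : 0 < lam := hlam.1
    have hb := hSle hC0 hlam0 (half_pos hδ).le (hC lam hlam0)
    rw [Real.dist_eq, sub_zero, abs_of_nonneg (hS0 lam)]
    have hfin : C * min lam lam⁻¹ < δ / 2 := by
      have hm : min lam lam⁻¹ ≤ lam := min_le_left _ _
      have : C * min lam lam⁻¹ ≤ C * (δ / (2 * (C + 1))) :=
        mul_le_mul_of_nonneg_left (le_trans hm hlam.2.le) hC0
      have hlt : C * (δ / (2 * (C + 1))) < δ / 2 := by
        rw [mul_div_assoc', div_lt_div_iff₀ (by positivity) (by norm_num)]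
        nlinarith
      linarith
    calc S lam ≤ δ / 2 + C * min lam lam⁻¹ := hb
      _ < δ := by linarith
end
end

section
/- Localized two-dimensional bilinear estimate (the estimate preceding (5.43) in the proof of Theorem 5.1): let χ : ℝ² → [0,1] be a smooth radially symmetric function with χ = 1 on {|x| ≤ 1} and χ = 0 on {|x| ≥ 2}. There exists a constant C > 0, depending only on χ, such that for every ρ > 0 and all H¹ functions g, h : ℝ² → ℂ, ∫_{ℝ²} χ(x/ρ)² |g(x)|² |h(x)|² dx ≤ C·( ‖χ(·/ρ)∇g‖²_{L²}‖h‖²_{L²} + ‖χ(·/ρ)∇h‖²_{L²}‖g‖²_{L²} + ρ^{−2}‖g‖²_{L²}‖h‖²_{L²} ). -/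
open MeasureTheory Filter
open scoped ENNReal NNReal

noncomputable section

set_option maxHeartbeats 2000000

lemma decomp (x : Plane) : x = ∑ i : Fin 2, x i • coordDir i := by
  ext j
  simp [coordDir, EuclideanSpace.single_apply, Finset.sum_apply]
  fin_cases j <;> simp

lemma opNorm_le_sqrt_frob {E : Type*} [NormedAddCommGroup E] [NormedSpace ℝ E]
    (L : Plane →L[ℝ] E) : ‖L‖ ≤ Real.sqrt (∑ i : Fin 2, ‖L (coordDir i)‖ ^ 2) := by
  refine L.opNorm_le_bound (Real.sqrt_nonneg _) fun x => ?_
  calc ‖L x‖ = ‖∑ i : Fin 2, x i • L (coordDir i)‖ := by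
        conv_lhs => rw [decomp x]
        simp
    _ ≤ ∑ i : Fin 2, ‖x i‖ * ‖L (coordDir i)‖ := by
        refine (norm_sum_le _ _).trans ?_
        simp [norm_smul]
    _ ≤ Real.sqrt (∑ i : Fin 2, ‖x i‖ ^ 2) * Real.sqrt (∑ i : Fin 2, ‖L (coordDir i)‖ ^ 2) :=
        Real.sum_mul_le_sqrt_mul_sqrt _ _ _
    _ = Real.sqrt (∑ i : Fin 2, ‖L (coordDir i)‖ ^ 2) * ‖x‖ := by
        rw [mul_comm, EuclideanSpace.norm_eq]

lemma fderiv_norm_le_sqrt_gradNormSq {E : Type*} [NormedAddCommGroup E] [NormedSpace ℝ E]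
    (f : Plane → E) (x : Plane) : ‖fderiv ℝ f x‖ ≤ Real.sqrt (gradNormSq f x) :=
  opNorm_le_sqrt_frob _

lemma gradNormSq_nonneg {E : Type*} [NormedAddCommGroup E] [NormedSpace ℝ E]
    (f : Plane → E) (x : Plane) : 0 ≤ gradNormSq f x :=
  Finset.sum_nonneg fun _ _ => sq_nonneg _

lemma gradNormSq_continuous {E : Type*} [NormedAddCommGroup E] [NormedSpace ℝ E]
    {f : Plane → E} (hf : ContDiff ℝ 1 f) : Continuous (gradNormSq f) := by
  apply continuous_finset_sum
  intro i _
  exact (((hf.continuous_fderiv one_ne_zero).clm_apply continuous_const).norm).pow 2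

lemma sq_add3_le (a b c : ℝ≥0∞) : (a + b + c) ^ 2 ≤ 5 * (a ^ 2 + b ^ 2 + c ^ 2) := by
  have key : ∀ x y : ℝ≥0∞, x * y ≤ x ^ 2 + y ^ 2 := by
    intro x y
    rcases le_total x y with hxy | hxy
    · calc x * y ≤ y * y := mul_le_mul_left hxy y
        _ = y ^ 2 := (sq y).symm
        _ ≤ x ^ 2 + y ^ 2 := le_add_self
    · calc x * y ≤ x * x := mul_le_mul_right hxy x
        _ = x ^ 2 := (sq x).symm
        _ ≤ x ^ 2 + y ^ 2 := le_self_add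
  calc (a + b + c) ^ 2
      = (a ^ 2 + b ^ 2 + c ^ 2) + (a * b + a * b) + (a * c + a * c) + (b * c + b * c) := by ring
    _ ≤ (a ^ 2 + b ^ 2 + c ^ 2) + ((a ^ 2 + b ^ 2) + (a ^ 2 + b ^ 2))
        + ((a ^ 2 + c ^ 2) + (a ^ 2 + c ^ 2)) + ((b ^ 2 + c ^ 2) + (b ^ 2 + c ^ 2)) := by
        gcongr <;> exact key _ _
    _ ≤ 5 * (a ^ 2 + b ^ 2 + c ^ 2) := by ring_nf; exact le_refl _

lemma rpow_two_eq_pow (x : ℝ≥0∞) : x ^ (2:ℝ) = x ^ (2:ℕ) := by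
  rw [show (2:ℝ) = ((2:ℕ):ℝ) by norm_num, ENNReal.rpow_natCast]

lemma ofReal_rpow_two (t : ℝ) (ht : 0 ≤ t) :
    ENNReal.ofReal t ^ (2:ℝ) = ENNReal.ofReal (t ^ 2) := by
  rw [ENNReal.ofReal_rpow_of_nonneg ht (by norm_num : (0:ℝ) ≤ 2)]
  congr 1
  rw [show (2:ℝ) = ((2:ℕ):ℝ) by norm_num, Real.rpow_natCast]

lemma half_mul_sq (X Y : ℝ≥0∞) : (X ^ (1/2:ℝ) * Y ^ (1/2:ℝ)) ^ (2:ℕ) = X * Y := by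
  rw [mul_pow, ← ENNReal.rpow_natCast (X ^ (1/2:ℝ)) 2, ← ENNReal.rpow_natCast (Y ^ (1/2:ℝ)) 2,
    ← ENNReal.rpow_mul, ← ENNReal.rpow_mul]
  norm_num

/-- Cauchy–Schwarz for `lintegral`s of products of nonnegative continuous functions. -/
lemma holder_sq (f k : Plane → ℝ) (hf : Continuous f) (hk : Continuous k)
    (hf0 : ∀ x, 0 ≤ f x) (hk0 : ∀ x, 0 ≤ k x) :
    (∫⁻ x, ENNReal.ofReal (f x * k x)) ^ (2:ℕ) ≤
      (∫⁻ x, ENNReal.ofReal (f x ^ 2)) * (∫⁻ x, ENNReal.ofReal (k x ^ 2)) := by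
  have hpq : Real.HolderConjugate 2 2 := Real.HolderConjugate.two_two
  have h1 : (∫⁻ x, ENNReal.ofReal (f x * k x) ∂(volume : Measure Plane)) ≤
      (∫⁻ x, ENNReal.ofReal (f x) ^ (2:ℝ)) ^ (1/2:ℝ) *
      (∫⁻ x, ENNReal.ofReal (k x) ^ (2:ℝ)) ^ (1/2:ℝ) := by
    have h2 := ENNReal.lintegral_mul_le_Lp_mul_Lq (volume : Measure Plane) hpq
      ((ENNReal.measurable_ofReal.comp hf.measurable).aemeasurable)
      ((ENNReal.measurable_ofReal.comp hk.measurable).aemeasurable)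
    have heq : (∫⁻ x, ENNReal.ofReal (f x * k x) ∂(volume : Measure Plane)) =
        ∫⁻ x, ENNReal.ofReal (f x) * ENNReal.ofReal (k x) :=
      lintegral_congr fun x => ENNReal.ofReal_mul (hf0 x)
    rw [heq]
    simpa using h2
  calc (∫⁻ x, ENNReal.ofReal (f x * k x)) ^ (2:ℕ)
      ≤ ((∫⁻ x, ENNReal.ofReal (f x) ^ (2:ℝ)) ^ (1/2:ℝ) *
         (∫⁻ x, ENNReal.ofReal (k x) ^ (2:ℝ)) ^ (1/2:ℝ)) ^ (2:ℕ) := pow_le_pow_left' h1 2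
    _ = (∫⁻ x, ENNReal.ofReal (f x) ^ (2:ℝ)) * (∫⁻ x, ENNReal.ofReal (k x) ^ (2:ℝ)) :=
        half_mul_sq _ _
    _ = _ := by
        congr 1
        · exact lintegral_congr fun x => ofReal_rpow_two _ (hf0 x)
        · exact lintegral_congr fun x => ofReal_rpow_two _ (hk0 x)

/-- Localized two-dimensional bilinear estimate (the estimate preceding
(5.43) in the proof of Theorem 5.1). -/
theorem localized_bilinear_estimate
    (χ : Plane → ℝ) (hχsmooth : ContDiff ℝ (⊤ : ℕ∞) χ)
    (hχrange : ∀ x, χ x ∈ Set.Icc (0 : ℝ) 1)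
    (hχrad : ∀ x y : Plane, ‖x‖ = ‖y‖ → χ x = χ y)
    (hχone : ∀ x : Plane, ‖x‖ ≤ 1 → χ x = 1)
    (hχzero : ∀ x : Plane, 2 ≤ ‖x‖ → χ x = 0) :
    ∃ C > 0, ∀ ρ : ℝ, 0 < ρ → ∀ g h : Plane → ℂ, IsH1 g → IsH1 h →
      (∫ x, χ (ρ⁻¹ • x) ^ 2 * ‖g x‖ ^ 2 * ‖h x‖ ^ 2)
        ≤ C * ((∫ x, χ (ρ⁻¹ • x) ^ 2 * gradNormSq g x) * (∫ x, ‖h x‖ ^ 2)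
            + (∫ x, χ (ρ⁻¹ • x) ^ 2 * gradNormSq h x) * (∫ x, ‖g x‖ ^ 2)
            + ρ⁻¹ ^ 2 * (∫ x, ‖g x‖ ^ 2) * (∫ x, ‖h x‖ ^ 2)) := by
  -- the constant in the Sobolev inequality
  have h1top : (1 : WithTop ℕ∞) ≤ ((⊤:ℕ∞) : WithTop ℕ∞) := by
    exact_mod_cast (le_top : (1:ℕ∞) ≤ ⊤)
  set C₀ : ℝ≥0 := lintegralPowLePowLIntegralFDerivConst (volume : Measure Plane) 2 with hC₀
  -- a bound for the gradient of χ
  obtain ⟨K, hK0, hK⟩ : ∃ K, 0 ≤ K ∧ ∀ x, ‖fderiv ℝ χ x‖ ≤ K := by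
    have hcont : Continuous fun x => ‖fderiv ℝ χ x‖ :=
      (hχsmooth.continuous_fderiv (by simp)).norm
    have hsupp : ∀ x : Plane, 2 < ‖x‖ → fderiv ℝ χ x = 0 := by
      intro x hx
      have hzero : ∀ᶠ y in nhds x, χ y = 0 := by
        have : {y : Plane | 2 < ‖y‖} ∈ nhds x :=
          (isOpen_lt continuous_const continuous_norm).mem_nhds hx
        filter_upwards [this] with y hy
        exact hχzero y hy.le
      have : fderiv ℝ χ x = fderiv ℝ (fun _ : Plane => (0:ℝ)) x :=
        Filter.EventuallyEq.fderiv_eq hzero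
      simpa using this
    obtain ⟨K, hK⟩ := (isCompact_closedBall (0:Plane) 2).exists_bound_of_continuousOn
      hcont.continuousOn
    refine ⟨max K 0, le_max_right _ _, fun x => ?_⟩
    rcases le_or_gt ‖x‖ 2 with hx | hx
    · exact le_trans (by simpa using hK x (by simpa [Metric.mem_closedBall, dist_eq_norm] using hx))
        (le_max_left _ _)
    · simp [hsupp x hx, le_max_right]
  set K' : ℝ := K + 1 with hK'
  have hK'1 : (1:ℝ) ≤ K' := by linarith
  have hK'0 : (0:ℝ) < K' := by linarith
  refine ⟨5 * (C₀ : ℝ) * K' ^ 2 + 1, by positivity, ?_⟩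
  intro ρ hρ g h hg hh
  obtain ⟨hgC, hgL2, hgH⟩ := hg
  obtain ⟨hhC, hhL2, hhH⟩ := hh
  set c : ℝ := ρ⁻¹ with hc
  have hc0 : 0 < c := by positivity
  set χρ : Plane → ℝ := fun x => χ (c • x) with hχρ
  have hχρcont : Continuous χρ := hχsmooth.continuous.comp (continuous_const_smul c)
  have hχρ01 : ∀ x, 0 ≤ χρ x ∧ χρ x ≤ 1 := fun x => ⟨(hχrange _).1, (hχrange _).2⟩
  -- derivative of χρ
  have hχρderiv : ∀ x : Plane, HasFDerivAt χρ
      ((fderiv ℝ χ (c • x)).comp (c • ContinuousLinearMap.id ℝ Plane)) x := by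
    intro x
    have h1 : HasFDerivAt (fun y : Plane => c • y) (c • ContinuousLinearMap.id ℝ Plane) x := by
      exact (hasFDerivAt_id x).const_smul c
    exact ((hχsmooth.differentiable (by simp) (c • x)).hasFDerivAt).comp x h1
  have hχρderiv_norm : ∀ x : Plane,
      ‖(fderiv ℝ χ (c • x)).comp (c • ContinuousLinearMap.id ℝ Plane)‖ ≤ c * K := by
    intro x
    calc ‖(fderiv ℝ χ (c • x)).comp (c • ContinuousLinearMap.id ℝ Plane)‖
        ≤ ‖fderiv ℝ χ (c • x)‖ * ‖c • ContinuousLinearMap.id ℝ Plane‖ :=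
          ContinuousLinearMap.opNorm_comp_le _ _
      _ ≤ K * c := by
          have h1 : ‖c • ContinuousLinearMap.id ℝ Plane‖ ≤ c := by
            rw [norm_smul c (ContinuousLinearMap.id ℝ Plane)]
            calc ‖c‖ * ‖ContinuousLinearMap.id ℝ Plane‖ ≤ ‖c‖ * 1 :=
              mul_le_mul_of_nonneg_left ContinuousLinearMap.norm_id_le (norm_nonneg c)
            _ = c := by rw [mul_one, Real.norm_eq_abs, abs_of_pos hc0]
          exact mul_le_mul (hK _) h1 (norm_nonneg _) hK0
      _ = c * K := mul_comm _ _
  -- the localized product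
  set u : Plane → ℂ := fun x => χρ x • (g x * h x) with hu
  have huC : ContDiff ℝ 1 u := by
    have h1 : ContDiff ℝ 1 χρ :=
      (hχsmooth.of_le h1top).comp (contDiff_id.const_smul c)
    exact h1.smul (hgC.mul hhC)
  have h2u : HasCompactSupport u := by
    refine HasCompactSupport.intro (isCompact_closedBall (0:Plane) (2*ρ)) fun x hx => ?_
    have hx' : 2 * ρ < ‖x‖ := by
      simpa [Metric.mem_closedBall, dist_eq_norm, not_le] using hx
    have h2 : 2 ≤ ‖c • x‖ := by
      rw [norm_smul c x, Real.norm_eq_abs, abs_of_pos hc0, hc]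
      calc (2:ℝ) = ρ⁻¹ * (2 * ρ) := by field_simp
        _ ≤ ρ⁻¹ * ‖x‖ := by gcongr
    have : χρ x = 0 := hχzero _ h2
    simp [hu, this]
  -- pointwise bound for the derivative of u
  have hfderiv_u : ∀ x : Plane, ‖fderiv ℝ u x‖ ≤
      χρ x * (‖g x‖ * Real.sqrt (gradNormSq h x)) +
      χρ x * (‖h x‖ * Real.sqrt (gradNormSq g x)) +
      (c * K) * (‖g x‖ * ‖h x‖) := by
    intro x
    have hgd : HasFDerivAt g (fderiv ℝ g x) x :=
      (hgC.differentiable one_ne_zero x).hasFDerivAt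
    have hhd : HasFDerivAt h (fderiv ℝ h x) x :=
      (hhC.differentiable one_ne_zero x).hasFDerivAt
    have hprod : HasFDerivAt (fun y => g y * h y)
        (g x • fderiv ℝ h x + h x • fderiv ℝ g x) x := hgd.mul hhd
    have hud : HasFDerivAt u
        (χρ x • (g x • fderiv ℝ h x + h x • fderiv ℝ g x) +
          ((fderiv ℝ χ (c • x)).comp (c • ContinuousLinearMap.id ℝ Plane)).smulRight
            (g x * h x)) x := (hχρderiv x).smul hprod
    rw [hud.fderiv]
    calc ‖χρ x • (g x • fderiv ℝ h x + h x • fderiv ℝ g x) +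
          ((fderiv ℝ χ (c • x)).comp (c • ContinuousLinearMap.id ℝ Plane)).smulRight
            (g x * h x)‖
        ≤ ‖χρ x • (g x • fderiv ℝ h x + h x • fderiv ℝ g x)‖ +
          ‖((fderiv ℝ χ (c • x)).comp (c • ContinuousLinearMap.id ℝ Plane)).smulRight
            (g x * h x)‖ := norm_add_le _ _
      _ ≤ χρ x * (‖g x‖ * Real.sqrt (gradNormSq h x) + ‖h x‖ * Real.sqrt (gradNormSq g x)) +
          (c * K) * (‖g x‖ * ‖h x‖) := by
          gcongr ?_ + ?_
          · rw [norm_smul (χρ x) (g x • fderiv ℝ h x + h x • fderiv ℝ g x),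
              Real.norm_eq_abs, abs_of_nonneg (hχρ01 x).1]
            refine mul_le_mul_of_nonneg_left ?_ (hχρ01 x).1
            refine (norm_add_le _ _).trans ?_
            gcongr
            · rw [norm_smul (g x) (fderiv ℝ h x)]
              exact mul_le_mul_of_nonneg_left (fderiv_norm_le_sqrt_gradNormSq h x) (norm_nonneg _)
            · rw [norm_smul (h x) (fderiv ℝ g x)]
              exact mul_le_mul_of_nonneg_left (fderiv_norm_le_sqrt_gradNormSq g x) (norm_nonneg _)
          · rw [ContinuousLinearMap.norm_smulRight_apply, norm_mul]
            exact mul_le_mul_of_nonneg_right (hχρderiv_norm x) (by positivity)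
      _ = _ := by ring
  -- names for the integrals
  set Jg := ∫ x, ‖g x‖ ^ 2 with hJg
  set Jh := ∫ x, ‖h x‖ ^ 2 with hJh
  have hJg0 : 0 ≤ Jg := integral_nonneg fun x => by positivity
  have hJh0 : 0 ≤ Jh := integral_nonneg fun x => by positivity
  have hGg_cont : Continuous (gradNormSq g) := gradNormSq_continuous hgC
  have hGh_cont : Continuous (gradNormSq h) := gradNormSq_continuous hhC
  have hIgInt : Integrable (fun x => χρ x ^ 2 * gradNormSq g x) := by
    refine hgH.mono' (((hχρcont.pow 2).mul hGg_cont).aestronglyMeasurable)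
      (ae_of_all _ fun x => ?_)
    rw [Real.norm_eq_abs,
      abs_of_nonneg (mul_nonneg (by positivity) (gradNormSq_nonneg g x))]
    calc χρ x ^ 2 * gradNormSq g x ≤ 1 * gradNormSq g x := by
          gcongr
          · exact gradNormSq_nonneg g x
          · exact pow_le_one₀ (hχρ01 x).1 (hχρ01 x).2
      _ = gradNormSq g x := one_mul _
  have hIhInt : Integrable (fun x => χρ x ^ 2 * gradNormSq h x) := by
    refine hhH.mono' (((hχρcont.pow 2).mul hGh_cont).aestronglyMeasurable)
      (ae_of_all _ fun x => ?_)
    rw [Real.norm_eq_abs,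
      abs_of_nonneg (mul_nonneg (by positivity) (gradNormSq_nonneg h x))]
    calc χρ x ^ 2 * gradNormSq h x ≤ 1 * gradNormSq h x := by
          gcongr
          · exact gradNormSq_nonneg h x
          · exact pow_le_one₀ (hχρ01 x).1 (hχρ01 x).2
      _ = gradNormSq h x := one_mul _
  set Ig := ∫ x, χρ x ^ 2 * gradNormSq g x with hIg
  set Ih := ∫ x, χρ x ^ 2 * gradNormSq h x with hIh
  have hIg0 : 0 ≤ Ig := integral_nonneg fun x =>
    mul_nonneg (by positivity) (gradNormSq_nonneg g x)
  have hIh0 : 0 ≤ Ih := integral_nonneg fun x =>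
    mul_nonneg (by positivity) (gradNormSq_nonneg h x)
  -- lintegral versions
  have hlJg : (∫⁻ x, ENNReal.ofReal (‖g x‖ ^ 2)) = ENNReal.ofReal Jg :=
    (ofReal_integral_eq_lintegral_ofReal hgL2 (ae_of_all _ fun x => by positivity)).symm
  have hlJh : (∫⁻ x, ENNReal.ofReal (‖h x‖ ^ 2)) = ENNReal.ofReal Jh :=
    (ofReal_integral_eq_lintegral_ofReal hhL2 (ae_of_all _ fun x => by positivity)).symm
  have hlIg : (∫⁻ x, ENNReal.ofReal (χρ x ^ 2 * gradNormSq g x)) = ENNReal.ofReal Ig :=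
    (ofReal_integral_eq_lintegral_ofReal hIgInt (ae_of_all _ fun x =>
      mul_nonneg (by positivity) (gradNormSq_nonneg g x))).symm
  have hlIh : (∫⁻ x, ENNReal.ofReal (χρ x ^ 2 * gradNormSq h x)) = ENNReal.ofReal Ih :=
    (ofReal_integral_eq_lintegral_ofReal hIhInt (ae_of_all _ fun x =>
      mul_nonneg (by positivity) (gradNormSq_nonneg h x))).symm
  -- the three pieces
  set B := ∫⁻ x, ENNReal.ofReal (χρ x * (‖g x‖ * Real.sqrt (gradNormSq h x))) with hB
  set D := ∫⁻ x, ENNReal.ofReal (χρ x * (‖h x‖ * Real.sqrt (gradNormSq g x))) with hD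
  set A := ∫⁻ x, ENNReal.ofReal ((c * K) * (‖g x‖ * ‖h x‖)) with hA
  -- Cauchy-Schwarz bounds for the squares of the pieces
  have hB2 : B ^ (2:ℕ) ≤ ENNReal.ofReal (Ih * Jg) := by
    have h1 : B = ∫⁻ x, ENNReal.ofReal ((χρ x * Real.sqrt (gradNormSq h x)) * ‖g x‖) :=
      lintegral_congr fun x => by rw [mul_assoc, mul_comm (Real.sqrt _)]
    have h2 := holder_sq (fun x => χρ x * Real.sqrt (gradNormSq h x)) (fun x => ‖g x‖)
      (hχρcont.mul (Real.continuous_sqrt.comp hGh_cont)) hgC.continuous.norm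
      (fun x => mul_nonneg (hχρ01 x).1 (Real.sqrt_nonneg _)) (fun x => norm_nonneg _)
    have h3 : (∫⁻ x, ENNReal.ofReal ((χρ x * Real.sqrt (gradNormSq h x)) ^ 2)) =
        ∫⁻ x, ENNReal.ofReal (χρ x ^ 2 * gradNormSq h x) :=
      lintegral_congr fun x => by
        rw [mul_pow, Real.sq_sqrt (gradNormSq_nonneg h x)]
    rw [h1]
    calc (∫⁻ x, ENNReal.ofReal ((χρ x * Real.sqrt (gradNormSq h x)) * ‖g x‖)) ^ (2:ℕ)
        ≤ (∫⁻ x, ENNReal.ofReal ((χρ x * Real.sqrt (gradNormSq h x)) ^ 2)) *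
          (∫⁻ x, ENNReal.ofReal (‖g x‖ ^ 2)) := h2
      _ = ENNReal.ofReal Ih * ENNReal.ofReal Jg := by rw [h3, hlIh, hlJg]
      _ = ENNReal.ofReal (Ih * Jg) := (ENNReal.ofReal_mul hIh0).symm
  have hD2 : D ^ (2:ℕ) ≤ ENNReal.ofReal (Ig * Jh) := by
    have h1 : D = ∫⁻ x, ENNReal.ofReal ((χρ x * Real.sqrt (gradNormSq g x)) * ‖h x‖) :=
      lintegral_congr fun x => by rw [mul_assoc, mul_comm (Real.sqrt _)]
    have h2 := holder_sq (fun x => χρ x * Real.sqrt (gradNormSq g x)) (fun x => ‖h x‖)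
      (hχρcont.mul (Real.continuous_sqrt.comp hGg_cont)) hhC.continuous.norm
      (fun x => mul_nonneg (hχρ01 x).1 (Real.sqrt_nonneg _)) (fun x => norm_nonneg _)
    have h3 : (∫⁻ x, ENNReal.ofReal ((χρ x * Real.sqrt (gradNormSq g x)) ^ 2)) =
        ∫⁻ x, ENNReal.ofReal (χρ x ^ 2 * gradNormSq g x) :=
      lintegral_congr fun x => by
        rw [mul_pow, Real.sq_sqrt (gradNormSq_nonneg g x)]
    rw [h1]
    calc (∫⁻ x, ENNReal.ofReal ((χρ x * Real.sqrt (gradNormSq g x)) * ‖h x‖)) ^ (2:ℕ)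
        ≤ (∫⁻ x, ENNReal.ofReal ((χρ x * Real.sqrt (gradNormSq g x)) ^ 2)) *
          (∫⁻ x, ENNReal.ofReal (‖h x‖ ^ 2)) := h2
      _ = ENNReal.ofReal Ig * ENNReal.ofReal Jh := by rw [h3, hlIg, hlJh]
      _ = ENNReal.ofReal (Ig * Jh) := (ENNReal.ofReal_mul hIg0).symm
  have hcK0 : 0 ≤ c * K := mul_nonneg hc0.le hK0
  have hA2 : A ^ (2:ℕ) ≤ ENNReal.ofReal ((c * K) ^ 2 * (Jg * Jh)) := by
    have h1 : A = ENNReal.ofReal (c * K) * ∫⁻ x, ENNReal.ofReal (‖g x‖ * ‖h x‖) := by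
      rw [hA, ← lintegral_const_mul' _ _ ENNReal.ofReal_ne_top]
      exact lintegral_congr fun x => ENNReal.ofReal_mul hcK0
    have h2 := holder_sq (fun x => ‖g x‖) (fun x => ‖h x‖)
      hgC.continuous.norm hhC.continuous.norm (fun x => norm_nonneg _) (fun x => norm_nonneg _)
    calc A ^ (2:ℕ) = ENNReal.ofReal (c * K) ^ (2:ℕ) *
          (∫⁻ x, ENNReal.ofReal (‖g x‖ * ‖h x‖)) ^ (2:ℕ) := by rw [h1, mul_pow]
      _ ≤ ENNReal.ofReal (c * K) ^ (2:ℕ) *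
          ((∫⁻ x, ENNReal.ofReal (‖g x‖ ^ 2)) * (∫⁻ x, ENNReal.ofReal (‖h x‖ ^ 2))) :=
          mul_le_mul_right h2 _
      _ = ENNReal.ofReal ((c * K) ^ 2 * (Jg * Jh)) := by
          rw [hlJg, hlJh, ← ENNReal.ofReal_pow hcK0, ← ENNReal.ofReal_mul hJg0,
            ← ENNReal.ofReal_mul (by positivity)]
  -- measurability of the pieces
  have mB : Measurable fun x => ENNReal.ofReal (χρ x * (‖g x‖ * Real.sqrt (gradNormSq h x))) :=
    ENNReal.measurable_ofReal.comp
      (hχρcont.mul (hgC.continuous.norm.mul (Real.continuous_sqrt.comp hGh_cont))).measurable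
  have mD : Measurable fun x => ENNReal.ofReal (χρ x * (‖h x‖ * Real.sqrt (gradNormSq g x))) :=
    ENNReal.measurable_ofReal.comp
      (hχρcont.mul (hhC.continuous.norm.mul (Real.continuous_sqrt.comp hGg_cont))).measurable
  -- the gradient integral is bounded by B + D + A
  have step1 : (∫⁻ x, (‖fderiv ℝ u x‖₊ : ℝ≥0∞)) ≤ B + D + A := by
    calc (∫⁻ x, (‖fderiv ℝ u x‖₊ : ℝ≥0∞)) = ∫⁻ x, ENNReal.ofReal ‖fderiv ℝ u x‖ :=
        lintegral_congr fun x => (ofReal_norm _).symm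
      _ ≤ ∫⁻ x, (ENNReal.ofReal (χρ x * (‖g x‖ * Real.sqrt (gradNormSq h x))) +
            ENNReal.ofReal (χρ x * (‖h x‖ * Real.sqrt (gradNormSq g x))) +
            ENNReal.ofReal ((c * K) * (‖g x‖ * ‖h x‖))) := by
          refine lintegral_mono fun x => ?_
          rw [← ENNReal.ofReal_add (mul_nonneg (hχρ01 x).1 (by positivity))
              (mul_nonneg (hχρ01 x).1 (by positivity)),
            ← ENNReal.ofReal_add (add_nonneg (mul_nonneg (hχρ01 x).1 (by positivity))
              (mul_nonneg (hχρ01 x).1 (by positivity))) (mul_nonneg hcK0 (by positivity))]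
          exact ENNReal.ofReal_le_ofReal (hfderiv_u x)
      _ = B + D + A := by
          rw [lintegral_add_left (show Measurable fun x => ENNReal.ofReal (χρ x * (‖g x‖ * Real.sqrt (gradNormSq h x))) + ENNReal.ofReal (χρ x * (‖h x‖ * Real.sqrt (gradNormSq g x))) from mB.add mD), lintegral_add_left mB]
  -- the Sobolev inequality
  have hp2 : Real.HolderConjugate (Module.finrank ℝ Plane) 2 := by
    rw [finrank_euclideanSpace_fin]
    exact_mod_cast Real.HolderConjugate.two_two
  have main := lintegral_pow_le_pow_lintegral_fderiv (volume : Measure Plane) huC h2u hp2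
  -- identify the left-hand side
  have hLmain : (∫⁻ x, ENNReal.ofReal (χρ x ^ 2 * ‖g x‖ ^ 2 * ‖h x‖ ^ 2)) =
      ∫⁻ x, ((‖u x‖₊ : ℝ≥0∞)) ^ (2:ℝ) := by
    refine lintegral_congr fun x => ?_
    have hnu : ‖u x‖ = χρ x * (‖g x‖ * ‖h x‖) := by
      have h1 := norm_smul (χρ x) (g x * h x)
      rw [hu]
      simp only []
      rw [h1, Real.norm_eq_abs, abs_of_nonneg (hχρ01 x).1, norm_mul]
    rw [rpow_two_eq_pow, ← enorm_eq_nnnorm, ← ofReal_norm, ← ENNReal.ofReal_pow (norm_nonneg _), hnu]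
    congr 1
    ring
  -- assemble the chain of inequalities in ℝ≥0∞
  set S : ℝ := Ih * Jg + Ig * Jh + (c * K) ^ 2 * (Jg * Jh) with hS
  have hchain : (∫⁻ x, ENNReal.ofReal (χρ x ^ 2 * ‖g x‖ ^ 2 * ‖h x‖ ^ 2)) ≤
      (C₀ : ℝ≥0∞) * (5 * ENNReal.ofReal S) := by
    calc (∫⁻ x, ENNReal.ofReal (χρ x ^ 2 * ‖g x‖ ^ 2 * ‖h x‖ ^ 2))
        = ∫⁻ x, ((‖u x‖₊ : ℝ≥0∞)) ^ (2:ℝ) := hLmain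
      _ ≤ (C₀ : ℝ≥0∞) * (∫⁻ x, (‖fderiv ℝ u x‖₊ : ℝ≥0∞)) ^ (2:ℝ) := main
      _ = (C₀ : ℝ≥0∞) * (∫⁻ x, (‖fderiv ℝ u x‖₊ : ℝ≥0∞)) ^ (2:ℕ) := by
          rw [rpow_two_eq_pow]
      _ ≤ (C₀ : ℝ≥0∞) * (B + D + A) ^ (2:ℕ) :=
          mul_le_mul_right (pow_le_pow_left' step1 2) _
      _ ≤ (C₀ : ℝ≥0∞) * (5 * (B ^ (2:ℕ) + D ^ (2:ℕ) + A ^ (2:ℕ))) :=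
          mul_le_mul_right (sq_add3_le B D A) _
      _ ≤ (C₀ : ℝ≥0∞) * (5 * (ENNReal.ofReal (Ih * Jg) + ENNReal.ofReal (Ig * Jh) +
            ENNReal.ofReal ((c * K) ^ 2 * (Jg * Jh)))) := by
          gcongr
      _ = (C₀ : ℝ≥0∞) * (5 * ENNReal.ofReal S) := by
          rw [hS, ENNReal.ofReal_add (by positivity) (by positivity),
            ENNReal.ofReal_add (mul_nonneg hIh0 hJg0) (mul_nonneg hIg0 hJh0)]
  -- conclude
  have hbr0 : 0 ≤ Ig * Jh + Ih * Jg + ρ⁻¹ ^ 2 * Jg * Jh := by positivity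
  have hSle : S ≤ K' ^ 2 * (Ig * Jh + Ih * Jg + ρ⁻¹ ^ 2 * Jg * Jh) := by
    have h1 : K ^ 2 ≤ K' ^ 2 := by nlinarith
    have h2 : (1:ℝ) ≤ K' ^ 2 := by nlinarith
    have e1 : (c * K) ^ 2 * (Jg * Jh) = K ^ 2 * (ρ⁻¹ ^ 2 * Jg * Jh) := by
      rw [hc]; ring
    rw [hS, e1]
    have hn1 : 0 ≤ Ih * Jg := mul_nonneg hIh0 hJg0
    have hn2 : 0 ≤ Ig * Jh := mul_nonneg hIg0 hJh0
    have hn3 : 0 ≤ ρ⁻¹ ^ 2 * Jg * Jh := by positivity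
    nlinarith [mul_le_mul_of_nonneg_right h1 hn3]
  have hfinal : (∫⁻ x, ENNReal.ofReal (χρ x ^ 2 * ‖g x‖ ^ 2 * ‖h x‖ ^ 2)) ≤
      ENNReal.ofReal ((5 * (C₀ : ℝ) * K' ^ 2 + 1) *
        (Ig * Jh + Ih * Jg + ρ⁻¹ ^ 2 * Jg * Jh)) := by
    refine hchain.trans ?_
    have hS0 : 0 ≤ S := by
      rw [hS]; positivity
    calc (C₀ : ℝ≥0∞) * (5 * ENNReal.ofReal S)
        = ENNReal.ofReal ((C₀ : ℝ) * (5 * S)) := by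
          rw [ENNReal.ofReal_mul (by positivity), ENNReal.ofReal_mul (by norm_num : (0:ℝ) ≤ 5),
            ENNReal.ofReal_coe_nnreal]
          norm_num
      _ ≤ ENNReal.ofReal ((5 * (C₀ : ℝ) * K' ^ 2 + 1) *
            (Ig * Jh + Ih * Jg + ρ⁻¹ ^ 2 * Jg * Jh)) := by
          refine ENNReal.ofReal_le_ofReal ?_
          have hC₀0 : (0:ℝ) ≤ (C₀ : ℝ) := (C₀ : ℝ≥0).coe_nonneg
          nlinarith [mul_le_mul_of_nonneg_left hSle (by positivity : (0:ℝ) ≤ 5 * (C₀:ℝ))]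
  -- translate back to a Bochner integral
  show (∫ x, χρ x ^ 2 * ‖g x‖ ^ 2 * ‖h x‖ ^ 2) ≤ (5 * (C₀ : ℝ) * K' ^ 2 + 1) *
      (Ig * Jh + Ih * Jg + ρ⁻¹ ^ 2 * Jg * Jh)
  rw [integral_eq_lintegral_of_nonneg_ae (ae_of_all _ fun x => by positivity)
    (show AEStronglyMeasurable (fun x => χρ x ^ 2 * ‖g x‖ ^ 2 * ‖h x‖ ^ 2) volume from (((hχρcont.pow 2).mul (hgC.continuous.norm.pow 2)).mul
      (hhC.continuous.norm.pow 2)).aestronglyMeasurable)]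
  refine ENNReal.toReal_le_of_le_ofReal (mul_nonneg (by positivity) hbr0) ?_
  exact hfinal
end
end

section
/- Square-function representation of the resonant nonlinearity: for every finitely supported a : ℤ → ℂ, ∑_{j∈ℤ} ( ∑_{(j₁,j₂,j₃)∈R(j)} a_{j₁}·conj(a_{j₂})·a_{j₃} )·conj(a_j) = ∑_{j∈ℤ}∑_{n∈ℤ} | ∑_{(j₁,j₂)∈ℤ² : j₁−j₂=j, j₁²−j₂²=n} a_{j₁}·conj(a_{j₂}) |²; in particular the left-hand side is a nonnegative real number. -/
noncomputable section

open Finset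

/-- Square-function representation of the resonant nonlinearity. -/
theorem resonance_square_function
    (a : ℤ → ℂ) (ha : (Function.support a).Finite) :
    (∑' j : ℤ,
        (∑' p : ℤ × ℤ × ℤ,
            if p.1 - p.2.1 + p.2.2 = j ∧ p.1 ^ 2 - p.2.1 ^ 2 + p.2.2 ^ 2 = j ^ 2
            then a p.1 * (starRingEnd ℂ) (a p.2.1) * a p.2.2 else 0)
          * (starRingEnd ℂ) (a j))
      = ((∑' q : ℤ × ℤ,
          ‖∑' p : ℤ × ℤ, if p.1 - p.2 = q.1 ∧ p.1 ^ 2 - p.2 ^ 2 = q.2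
              then a p.1 * (starRingEnd ℂ) (a p.2) else 0‖ ^ 2 : ℝ) : ℂ) ∧
    0 ≤ (∑' q : ℤ × ℤ,
          ‖∑' p : ℤ × ℤ, if p.1 - p.2 = q.1 ∧ p.1 ^ 2 - p.2 ^ 2 = q.2
              then a p.1 * (starRingEnd ℂ) (a p.2) else 0‖ ^ 2 : ℝ) := by
  classical
  refine ⟨?_, tsum_nonneg fun q => by positivity⟩
  set s : Finset ℤ := ha.toFinset with hs
  have hmem : ∀ x : ℤ, x ∉ s → a x = 0 := by
    intro x hx
    by_contra h
    exact hx (ha.mem_toFinset.mpr h)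
  set g : ℤ × ℤ → ℤ × ℤ := fun p => (p.1 - p.2, p.1 ^ 2 - p.2 ^ 2) with hg
  set T : Finset (ℤ × ℤ) := (s ×ˢ s).image g with hT
  set F : ℤ × ℤ → ℂ :=
    fun q => ∑ p ∈ s ×ˢ s, if g p = q then a p.1 * (starRingEnd ℂ) (a p.2) else 0 with hF
  -- inner 2d tsum equals F q
  have hF2 : ∀ q : ℤ × ℤ,
      (∑' p : ℤ × ℤ, if p.1 - p.2 = q.1 ∧ p.1 ^ 2 - p.2 ^ 2 = q.2
          then a p.1 * (starRingEnd ℂ) (a p.2) else 0) = F q := by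
    intro q
    rw [tsum_eq_sum (s := s ×ˢ s) ?_]
    · exact Finset.sum_congr rfl fun p _ => by
        simp only [hg, Prod.ext_iff]
    · intro p hp
      simp only [Finset.mem_product, not_and_or] at hp
      rcases hp with h | h <;> simp [hmem _ h]
  -- inner 3d tsum equals finite sum
  have hL1 : ∀ j : ℤ,
      (∑' p : ℤ × ℤ × ℤ,
          if p.1 - p.2.1 + p.2.2 = j ∧ p.1 ^ 2 - p.2.1 ^ 2 + p.2.2 ^ 2 = j ^ 2
          then a p.1 * (starRingEnd ℂ) (a p.2.1) * a p.2.2 else 0)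
        = ∑ p ∈ s ×ˢ (s ×ˢ s),
            if p.1 - p.2.1 + p.2.2 = j ∧ p.1 ^ 2 - p.2.1 ^ 2 + p.2.2 ^ 2 = j ^ 2
            then a p.1 * (starRingEnd ℂ) (a p.2.1) * a p.2.2 else 0 := by
    intro j
    refine tsum_eq_sum ?_
    intro p hp
    simp only [Finset.mem_product, not_and_or] at hp
    rcases hp with h | h | h <;> simp [hmem _ h]
  -- outer LHS tsum
  have hL : (∑' j : ℤ,
        (∑' p : ℤ × ℤ × ℤ,
            if p.1 - p.2.1 + p.2.2 = j ∧ p.1 ^ 2 - p.2.1 ^ 2 + p.2.2 ^ 2 = j ^ 2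
            then a p.1 * (starRingEnd ℂ) (a p.2.1) * a p.2.2 else 0)
          * (starRingEnd ℂ) (a j))
      = ∑ j ∈ s, (∑ p ∈ s ×ˢ (s ×ˢ s),
            if p.1 - p.2.1 + p.2.2 = j ∧ p.1 ^ 2 - p.2.1 ^ 2 + p.2.2 ^ 2 = j ^ 2
            then a p.1 * (starRingEnd ℂ) (a p.2.1) * a p.2.2 else 0)
          * (starRingEnd ℂ) (a j) := by
    rw [tsum_eq_sum (s := s) ?_]
    · exact Finset.sum_congr rfl fun j _ => by rw [hL1]
    · intro j hj
      simp [hmem _ hj]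
  -- outer RHS tsum
  have hR : (∑' q : ℤ × ℤ,
          ‖∑' p : ℤ × ℤ, if p.1 - p.2 = q.1 ∧ p.1 ^ 2 - p.2 ^ 2 = q.2
              then a p.1 * (starRingEnd ℂ) (a p.2) else 0‖ ^ 2 : ℝ)
      = ∑ q ∈ T, ‖F q‖ ^ 2 := by
    rw [tsum_eq_sum (s := T) ?_]
    · exact Finset.sum_congr rfl fun q _ => by rw [hF2]
    · intro q hq
      rw [hF2]
      have : F q = 0 := by
        rw [hF]
        refine Finset.sum_eq_zero fun p hp => ?_
        rw [if_neg]
        intro h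
        exact hq (h ▸ Finset.mem_image_of_mem g hp)
      simp [this]
  rw [hL, hR]
  -- cast RHS to complex and express as F q * conj (F q)
  have hcast : ((∑ q ∈ T, ‖F q‖ ^ 2 : ℝ) : ℂ)
      = ∑ q ∈ T, F q * (starRingEnd ℂ) (F q) := by
    push_cast
    refine Finset.sum_congr rfl fun q _ => ?_
    rw [Complex.mul_conj]
    norm_cast
    rw [← Complex.sq_norm]
  rw [hcast]
  -- expand conj F
  have hconj : ∀ q : ℤ × ℤ, (starRingEnd ℂ) (F q)
      = ∑ r ∈ s ×ˢ s, if g r = q then (starRingEnd ℂ) (a r.1) * a r.2 else 0 := by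
    intro q
    rw [hF, map_sum]
    exact Finset.sum_congr rfl fun r _ => by
      rw [apply_ite (starRingEnd ℂ), map_mul, Complex.conj_conj, map_zero]
  -- RHS as quadruple sum
  have hRHS : ∑ q ∈ T, F q * (starRingEnd ℂ) (F q)
      = ∑ p ∈ s ×ˢ s, ∑ r ∈ s ×ˢ s,
          if g r = g p
          then (a p.1 * (starRingEnd ℂ) (a p.2)) * ((starRingEnd ℂ) (a r.1) * a r.2)
          else 0 := by
    have step1 : ∀ q ∈ T, F q * (starRingEnd ℂ) (F q)
        = ∑ p ∈ s ×ˢ s, ∑ r ∈ s ×ˢ s,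
            (if g p = q then a p.1 * (starRingEnd ℂ) (a p.2) else 0)
              * (if g r = q then (starRingEnd ℂ) (a r.1) * a r.2 else 0) := by
      intro q _
      rw [hconj, hF, Finset.sum_mul_sum]
    rw [Finset.sum_congr rfl step1, Finset.sum_comm]
    refine Finset.sum_congr rfl fun p hp => ?_
    rw [Finset.sum_comm]
    refine Eq.trans (Finset.sum_congr rfl fun r _ => ?_) rfl
    have collapse : ∑ q ∈ T,
        (if g p = q then a p.1 * (starRingEnd ℂ) (a p.2) else 0)
          * (if g r = q then (starRingEnd ℂ) (a r.1) * a r.2 else 0)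
        = if g p ∈ T
          then (if g r = g p
            then (a p.1 * (starRingEnd ℂ) (a p.2)) * ((starRingEnd ℂ) (a r.1) * a r.2)
            else 0)
          else 0 := by
      rw [← Finset.sum_ite_eq' T (g p) (fun q =>
        if g r = q
        then (a p.1 * (starRingEnd ℂ) (a p.2)) * ((starRingEnd ℂ) (a r.1) * a r.2)
        else 0)]
      refine Finset.sum_congr rfl fun q _ => ?_
      by_cases h1 : g p = q
      · subst h1
        by_cases h2 : g r = g p <;> simp [h2]
      · rw [if_neg h1, zero_mul, if_neg (fun hc => h1 hc.symm)]
    rw [collapse, if_pos (Finset.mem_image_of_mem g hp)]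
  rw [hRHS]
  -- LHS: push conj a j inside
  have hLHS : ∑ j ∈ s, (∑ p ∈ s ×ˢ (s ×ˢ s),
        if p.1 - p.2.1 + p.2.2 = j ∧ p.1 ^ 2 - p.2.1 ^ 2 + p.2.2 ^ 2 = j ^ 2
        then a p.1 * (starRingEnd ℂ) (a p.2.1) * a p.2.2 else 0)
      * (starRingEnd ℂ) (a j)
      = ∑ j ∈ s, ∑ p ∈ s ×ˢ (s ×ˢ s),
          if p.1 - p.2.1 + p.2.2 = j ∧ p.1 ^ 2 - p.2.1 ^ 2 + p.2.2 ^ 2 = j ^ 2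
          then a p.1 * (starRingEnd ℂ) (a p.2.1) * a p.2.2 * (starRingEnd ℂ) (a j)
          else 0 := by
    refine Finset.sum_congr rfl fun j _ => ?_
    rw [Finset.sum_mul]
    exact Finset.sum_congr rfl fun p _ => by rw [ite_mul, zero_mul]
  rw [hLHS]
  -- now a bijection between index sets
  rw [← Finset.sum_product', ← Finset.sum_product']
  refine Finset.sum_nbij' (i := fun z : ℤ × ℤ × ℤ × ℤ => ((z.2.1, z.2.2.1), (z.1, z.2.2.2)))
    (j := fun w : (ℤ × ℤ) × ℤ × ℤ => (w.2.1, (w.1.1, w.1.2, w.2.2))) ?_ ?_ ?_ ?_ ?_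
  · intro z hz
    simp only [Finset.mem_product] at hz ⊢
    tauto
  · intro w hw
    simp only [Finset.mem_product] at hw ⊢
    tauto
  · intro z _; rfl
  · intro w _; rfl
  · intro z _
    obtain ⟨x, u, v, y⟩ := z
    have hiff : (u - v + y = x ∧ u ^ 2 - v ^ 2 + y ^ 2 = x ^ 2)
        ↔ g (x, y) = g (u, v) := by
      simp only [hg, Prod.ext_iff]
      constructor
      · rintro ⟨h1, h2⟩; exact ⟨by linarith, by linarith⟩
      · rintro ⟨h1, h2⟩; exact ⟨by linarith, by linarith⟩
    by_cases h : u - v + y = x ∧ u ^ 2 - v ^ 2 + y ^ 2 = x ^ 2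
    · rw [if_pos h, if_pos (hiff.mp h)]
      ring
    · rw [if_neg h, if_neg (fun hc => h (hiff.mpr hc))]
end
end
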